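/- arXiv:2003.05912 — 4 statements merged into one kernel-verified Lean document; each statement's English description precedes it below -/
import Mathlib

section
/- Suppose F is mixed-monotone with respect to a decomposition function d. Let (x, x̂) : [0, T] → ℝⁿ × ℝⁿ be a solution of the nondeterministic embedding ODE (ẋ, ẋ̂) = (d(x, w, x̂, ŵ), d(x̂, ŵ, x, w)) under piecewise continuous input (w, ŵ) : [0, T] → 𝒲 × 𝒲, and let (y, ŷ) : [0, T] → ℝⁿ × ℝⁿ be a solution of the same ODE under piecewise continuous input (v, v̂) : [0, T] → 𝒲 × 𝒲. If (x(0), x̂(0)) ⪯_SE (y(0), ŷ(0)) and (w(t), ŵ(t)) ⪯_SE (v(t), v̂(t)) for all t ∈ [0, T], then (x(t), x̂(t)) ⪯_SE (y(t), ŷ(t)) for all t ∈ [0, T]. -/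
open Set Function Filter Topology

open Metric
open scoped NNReal

lemma myLocallyLipschitz_exists_lipschitzOnWith {α β : Type*} [MetricSpace α] [MetricSpace β]
    {f : α → β} (hf : LocallyLipschitz f) {s : Set α} (hs : IsCompact s) :
    ∃ K : ℝ≥0, LipschitzOnWith K f s := by
  have hcont : Continuous f := hf.continuous
  choose K t ht hK using hf
  obtain ⟨I, hIs, hIcov⟩ := hs.elim_nhds_subcover (fun x => interior (t x))
    (fun x _ => interior_mem_nhds.2 (ht x))
  obtain ⟨δ, hδ, hball⟩ := lebesgue_number_lemma_of_metric hs
    (c := fun i : I => interior (t i.1)) (fun i => isOpen_interior)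
    (by intro x hx
        obtain ⟨i, hiI, hxi⟩ := Set.mem_iUnion₂.1 (hIcov hx)
        exact Set.mem_iUnion.2 ⟨⟨i, hiI⟩, hxi⟩)
  obtain ⟨C, hC⟩ := Metric.isBounded_iff.1 (hs.image_of_continuousOn hcont.continuousOn).isBounded
  set K0 : ℝ≥0 := I.sup K with hK0
  refine ⟨K0 + Real.toNNReal (C / δ), LipschitzOnWith.of_dist_le_mul ?_⟩
  intro a ha b hb
  rcases lt_or_ge (dist a b) δ with h | h
  · obtain ⟨i, hi⟩ := hball a ha
    have hbi : b ∈ t i.1 := interior_subset (hi (by simpa [Metric.mem_ball, dist_comm] using h))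
    have hai : a ∈ t i.1 := interior_subset (hi (Metric.mem_ball_self hδ))
    calc dist (f a) (f b) ≤ (K i.1 : ℝ) * dist a b := (hK i.1).dist_le_mul a hai b hbi
      _ ≤ ((K0 + Real.toNNReal (C / δ) : ℝ≥0) : ℝ) * dist a b := by
          apply mul_le_mul_of_nonneg_right _ dist_nonneg
          have : K i.1 ≤ K0 := Finset.le_sup i.2
          exact_mod_cast le_trans this (le_add_of_nonneg_right (zero_le'))
  · have hCd : dist (f a) (f b) ≤ C := hC (Set.mem_image_of_mem f ha) (Set.mem_image_of_mem f hb)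
    have hC0 : 0 ≤ C := le_trans dist_nonneg hCd
    have h1 : C / δ ≤ ((K0 + Real.toNNReal (C / δ) : ℝ≥0) : ℝ) := by
      push_cast
      have : C / δ ≤ (Real.toNNReal (C / δ) : ℝ) := (Real.le_coe_toNNReal _)
      linarith [K0.coe_nonneg]
    calc dist (f a) (f b) ≤ C := hCd
      _ = C / δ * δ := by field_simp
      _ ≤ ((K0 + Real.toNNReal (C / δ) : ℝ≥0) : ℝ) * dist a b := by
          apply mul_le_mul h1 h (le_of_lt hδ) (by positivity)


lemma mono_along {κ : Type*} [DecidableEq κ] [Fintype κ] (φ : (κ → ℝ) → ℝ) (a b : κ → ℝ)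
    (h : ∀ (k : κ) (u : κ → ℝ), (∀ j, u j = a j ∨ u j = b j) → u k = a k →
      φ u ≤ φ (Function.update u k (b k))) :
    φ a ≤ φ b := by
  have key : ∀ s : Finset κ, φ a ≤ φ (s.piecewise b a) := by
    intro s
    induction s using Finset.induction_on with
    | empty => simp
    | @insert k s hk ih =>
      have hval : ∀ j, s.piecewise b a j = a j ∨ s.piecewise b a j = b j := by
        intro j
        by_cases hj : j ∈ s
        · exact Or.inr (Finset.piecewise_eq_of_mem _ _ _ hj)
        · exact Or.inl (Finset.piecewise_eq_of_notMem _ _ _ hj)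
      have huk : s.piecewise b a k = a k := Finset.piecewise_eq_of_notMem _ _ _ hk
      have step := h k (s.piecewise b a) hval huk
      rw [← Finset.piecewise_insert] at step
      exact ih.trans step
  have := key Finset.univ
  simpa using this


lemma mix_mem {m : ℕ} {wl wu p q u : Fin m → ℝ} (hp : p ∈ Set.Icc wl wu)
    (hq : q ∈ Set.Icc wl wu) (hu : ∀ j, u j = p j ∨ u j = q j) : u ∈ Set.Icc wl wu := by
  constructor <;> intro j <;> rcases hu j with h | h <;> rw [h]
  · exact hp.1 j
  · exact hq.1 j
  · exact hp.2 j
  · exact hq.2 j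

lemma key_estimate {n m : ℕ} (wl wu : Fin m → ℝ)
    (d : (Fin n → ℝ) → (Fin m → ℝ) → (Fin n → ℝ) → (Fin m → ℝ) → (Fin n → ℝ))
    (hxm : ∀ (i j : Fin n), j ≠ i → ∀ (x xh : Fin n → ℝ) (s t : ℝ), s ≤ t →
        ∀ w ∈ Set.Icc wl wu, ∀ wh ∈ Set.Icc wl wu,
          d (Function.update x j s) w xh wh i ≤ d (Function.update x j t) w xh wh i)
    (hxh : ∀ (i j : Fin n) (x xh : Fin n → ℝ) (s t : ℝ), s ≤ t →
        ∀ w ∈ Set.Icc wl wu, ∀ wh ∈ Set.Icc wl wu,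
          d x w (Function.update xh j t) wh i ≤ d x w (Function.update xh j s) wh i)
    (hwm : ∀ (i : Fin n) (k : Fin m) (x xh : Fin n → ℝ) (s t : ℝ),
        wl k ≤ s → s ≤ t → t ≤ wu k →
        ∀ w ∈ Set.Icc wl wu, ∀ wh ∈ Set.Icc wl wu,
          d x (Function.update w k s) xh wh i ≤ d x (Function.update w k t) xh wh i)
    (hwh : ∀ (i : Fin n) (k : Fin m) (x xh : Fin n → ℝ) (s t : ℝ),
        wl k ≤ s → s ≤ t → t ≤ wu k →
        ∀ w ∈ Set.Icc wl wu, ∀ wh ∈ Set.Icc wl wu,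
          d x w xh (Function.update wh k t) i ≤ d x w xh (Function.update wh k s) i)
    (i : Fin n) (A B Ah Bh : Fin n → ℝ) (ωA ωB ωAh ωBh : Fin m → ℝ)
    (hωA : ωA ∈ Set.Icc wl wu) (hωB : ωB ∈ Set.Icc wl wu)
    (hωAh : ωAh ∈ Set.Icc wl wu) (hωBh : ωBh ∈ Set.Icc wl wu)
    (m0 : ℝ)
    (hAB : ∀ j, A j ≤ B j + m0) (hABi : A i = B i + m0)
    (hBhA : ∀ j, Bh j - m0 ≤ Ah j)
    (hω : ωA ≤ ωB) (hωineq : ωBh ≤ ωAh) (KM : ℝ)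
    (hLip : d (fun j => B j + m0) ωB (fun j => Bh j - m0) ωBh i ≤ d B ωB Bh ωBh i + KM) :
    d A ωA Ah ωAh i ≤ d B ωB Bh ωBh i + KM := by
  -- step a : increase ω from ωA to ωB
  have stepa : d A ωA Ah ωAh i ≤ d A ωB Ah ωAh i := by
    apply mono_along (fun u => d A u Ah ωAh i) ωA ωB
    intro k u hval huk
    have hu : u ∈ Set.Icc wl wu := mix_mem hωA hωB hval
    have := hwm i k A Ah (ωA k) (ωB k) (hωA.1 k) (hω k) (hωB.2 k) u hu ωAh hωAh
    simpa [huk ▸ Function.update_eq_self k u] using this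
  -- step b : decrease ω̂ from ωAh to ωBh
  have stepb : d A ωB Ah ωAh i ≤ d A ωB Ah ωBh i := by
    have := mono_along (fun u => - d A ωB Ah u i) ωBh ωAh ?_
    · linarith
    intro k u hval huk
    have hu : u ∈ Set.Icc wl wu := mix_mem hωBh hωAh hval
    have := hwh i k A Ah (ωBh k) (ωAh k) (hωBh.1 k) (hωineq k) (hωAh.2 k) ωB hωB u hu
    simp only [neg_le_neg_iff]
    calc d A ωB Ah (Function.update u k (ωAh k)) i
        ≤ d A ωB Ah (Function.update u k (ωBh k)) i := this
      _ = d A ωB Ah u i := by rw [show Function.update u k (ωBh k) = u by rw [← huk]; exact Function.update_eq_self k u]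
  -- step c : decrease x̂ from Ah to Bh - m0
  have stepc : d A ωB Ah ωBh i ≤ d A ωB (fun j => Bh j - m0) ωBh i := by
    have := mono_along (fun u => - d A ωB u ωBh i) (fun j => Bh j - m0) Ah ?_
    · linarith
    intro k u hval huk
    have := hxh i k A u (Bh k - m0) (Ah k) (hBhA k) ωB hωB ωBh hωBh
    simp only [neg_le_neg_iff]
    calc d A ωB (Function.update u k (Ah k)) ωBh i
        ≤ d A ωB (Function.update u k (Bh k - m0)) ωBh i := this
      _ = d A ωB u ωBh i := by rw [show Function.update u k (Bh k - m0) = u by rw [← show u k = Bh k - m0 from huk]; exact Function.update_eq_self k u]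
  -- step d : increase x from A to B + m0
  have stepd : d A ωB (fun j => Bh j - m0) ωBh i ≤
      d (fun j => B j + m0) ωB (fun j => Bh j - m0) ωBh i := by
    apply mono_along (fun u => d u ωB (fun j => Bh j - m0) ωBh i) A (fun j => B j + m0)
    intro k u hval huk
    by_cases hki : k = i
    · subst hki
      rw [show B k + m0 = A k from hABi.symm,
        show Function.update u k (A k) = u by rw [← huk]; exact Function.update_eq_self k u]
    · have := hxm i k hki u (fun j => Bh j - m0) (A k) (B k + m0) (hAB k) ωB hωB ωBh hωBh
      rw [show Function.update u k (A k) = u by rw [← huk]; exact Function.update_eq_self k u] at this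
      exact this
  linarith


/-- A function is piecewise continuous on a set `s` if it is continuous on `s` off of
finitely many points. -/
def PiecewiseContinuousOn {α : Type*} [TopologicalSpace α] (w : ℝ → α) (s : Set ℝ) : Prop :=
  ∃ E : Finset ℝ, ContinuousOn w (s \ (E : Set ℝ))

/-- `d` is a decomposition function for the vector field `F` on state space `ℝⁿ` with
disturbance set `𝒲 = Set.Icc wl wu ⊆ ℝᵐ`:  `d` is locally Lipschitz, agrees with `F` on the
diagonal, `dᵢ` is nondecreasing in `xⱼ` for `j ≠ i`, nonincreasing in every component of `x̂`,
nondecreasing in every component of `w` and nonincreasing in every component of `ŵ`. -/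
def IsDecompositionFunction {n m : ℕ} (wl wu : Fin m → ℝ)
    (F : (Fin n → ℝ) → (Fin m → ℝ) → (Fin n → ℝ))
    (d : (Fin n → ℝ) → (Fin m → ℝ) → (Fin n → ℝ) → (Fin m → ℝ) → (Fin n → ℝ)) : Prop :=
  LocallyLipschitz
      (fun p : ((Fin n → ℝ) × (Fin m → ℝ)) × ((Fin n → ℝ) × (Fin m → ℝ)) =>
        d p.1.1 p.1.2 p.2.1 p.2.2)
    ∧ (∀ x : Fin n → ℝ, ∀ w ∈ Set.Icc wl wu, d x w x w = F x w)
    ∧ (∀ (i j : Fin n), j ≠ i → ∀ (x xh : Fin n → ℝ) (s t : ℝ), s ≤ t →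
        ∀ w ∈ Set.Icc wl wu, ∀ wh ∈ Set.Icc wl wu,
          d (Function.update x j s) w xh wh i ≤ d (Function.update x j t) w xh wh i)
    ∧ (∀ (i j : Fin n) (x xh : Fin n → ℝ) (s t : ℝ), s ≤ t →
        ∀ w ∈ Set.Icc wl wu, ∀ wh ∈ Set.Icc wl wu,
          d x w (Function.update xh j t) wh i ≤ d x w (Function.update xh j s) wh i)
    ∧ (∀ (i : Fin n) (k : Fin m) (x xh : Fin n → ℝ) (s t : ℝ),
        wl k ≤ s → s ≤ t → t ≤ wu k →
        ∀ w ∈ Set.Icc wl wu, ∀ wh ∈ Set.Icc wl wu,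
          d x (Function.update w k s) xh wh i ≤ d x (Function.update w k t) xh wh i)
    ∧ (∀ (i : Fin n) (k : Fin m) (x xh : Fin n → ℝ) (s t : ℝ),
        wl k ≤ s → s ≤ t → t ≤ wu k →
        ∀ w ∈ Set.Icc wl wu, ∀ wh ∈ Set.Icc wl wu,
          d x w xh (Function.update wh k t) i ≤ d x w xh (Function.update wh k s) i)

/-- the nondeterministic embedding system associated with a decomposition
function `d` of a mixed-monotone system is monotone with respect to the southeast order,
both in the initial condition and in the disturbance input. -/
theorem nondeterministic_embedding_monotone_SE
    {n m : ℕ} (wl wu : Fin m → ℝ) (hwlu : wl ≤ wu)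
    (F : (Fin n → ℝ) → (Fin m → ℝ) → (Fin n → ℝ))
    (d : (Fin n → ℝ) → (Fin m → ℝ) → (Fin n → ℝ) → (Fin m → ℝ) → (Fin n → ℝ))
    (hd : IsDecompositionFunction wl wu F d)
    (T : ℝ) (hT : 0 ≤ T)
    (x xh y yh : ℝ → (Fin n → ℝ)) (w wh v vh : ℝ → (Fin m → ℝ))
    (hwmem : ∀ t ∈ Set.Icc (0:ℝ) T, w t ∈ Set.Icc wl wu)
    (hwhmem : ∀ t ∈ Set.Icc (0:ℝ) T, wh t ∈ Set.Icc wl wu)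
    (hvmem : ∀ t ∈ Set.Icc (0:ℝ) T, v t ∈ Set.Icc wl wu)
    (hvhmem : ∀ t ∈ Set.Icc (0:ℝ) T, vh t ∈ Set.Icc wl wu)
    (hwpc : PiecewiseContinuousOn w (Set.Icc 0 T))
    (hwhpc : PiecewiseContinuousOn wh (Set.Icc 0 T))
    (hvpc : PiecewiseContinuousOn v (Set.Icc 0 T))
    (hvhpc : PiecewiseContinuousOn vh (Set.Icc 0 T))
    -- (x, xh) is a solution of the embedding ODE under input (w, wh)
    (hx : ∀ t ∈ Set.Icc (0:ℝ) T, HasDerivAt x (d (x t) (w t) (xh t) (wh t)) t)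
    (hxh : ∀ t ∈ Set.Icc (0:ℝ) T, HasDerivAt xh (d (xh t) (wh t) (x t) (w t)) t)
    -- (y, yh) is a solution of the embedding ODE under input (v, vh)
    (hy : ∀ t ∈ Set.Icc (0:ℝ) T, HasDerivAt y (d (y t) (v t) (yh t) (vh t)) t)
    (hyh : ∀ t ∈ Set.Icc (0:ℝ) T, HasDerivAt yh (d (yh t) (vh t) (y t) (v t)) t)
    -- southeast-ordered initial conditions and inputs
    (h0 : x 0 ≤ y 0 ∧ yh 0 ≤ xh 0)
    (hinSE : ∀ t ∈ Set.Icc (0:ℝ) T, w t ≤ v t ∧ vh t ≤ wh t) :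
    ∀ t ∈ Set.Icc (0:ℝ) T, x t ≤ y t ∧ yh t ≤ xh t := by
  classical
  obtain ⟨hdLip, -, hxm, hxhm, hwm, hwhm⟩ := hd
  have hIccT : IsCompact (Set.Icc (0:ℝ) T) := isCompact_Icc
  have hxc : ContinuousOn x (Set.Icc 0 T) := fun t ht => (hx t ht).continuousAt.continuousWithinAt
  have hxhc : ContinuousOn xh (Set.Icc 0 T) := fun t ht => (hxh t ht).continuousAt.continuousWithinAt
  have hyc : ContinuousOn y (Set.Icc 0 T) := fun t ht => (hy t ht).continuousAt.continuousWithinAt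
  have hyhc : ContinuousOn yh (Set.Icc 0 T) := fun t ht => (hyh t ht).continuousAt.continuousWithinAt
  -- the family of coordinate differences (and the constant 0)
  set u : Option (Fin n ⊕ Fin n) → ℝ → ℝ := fun j t =>
    match j with
    | none => 0
    | some (Sum.inl i) => x t i - y t i
    | some (Sum.inr i) => yh t i - xh t i
    with hu
  have hucont : ∀ j, ContinuousOn (u j) (Set.Icc 0 T) := by
    rintro (_ | j | j)
    · exact continuousOn_const
    · exact ((continuous_apply j).comp_continuousOn hxc).sub
        ((continuous_apply j).comp_continuousOn hyc)
    · exact ((continuous_apply j).comp_continuousOn hyhc).sub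
        ((continuous_apply j).comp_continuousOn hxhc)
  have hne : (Finset.univ : Finset (Option (Fin n ⊕ Fin n))).Nonempty :=
    ⟨none, Finset.mem_univ _⟩
  set f : ℝ → ℝ := fun t => Finset.univ.sup' hne (fun j => u j t) with hf
  have hfc : ContinuousOn f (Set.Icc 0 T) :=
    ContinuousOn.finset_sup'_apply hne (fun j _ => hucont j)
  have hle : ∀ t j, u j t ≤ f t := fun t j => by exact Finset.le_sup' (fun j => u j t) (Finset.mem_univ j)
  have hf0 : ∀ t, 0 ≤ f t := fun t => hle t none
  have hlex : ∀ t j, x t j - y t j ≤ f t := fun t j => hle t (some (Sum.inl j))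
  have hleyh : ∀ t j, yh t j - xh t j ≤ f t := fun t j => hle t (some (Sum.inr j))
  have hfa : f 0 ≤ 0 := by
    apply Finset.sup'_le
    rintro (_ | j | j) -
    · exact le_refl 0
    · simpa [u, sub_nonpos] using h0.1 j
    · simpa [u, sub_nonpos] using h0.2 j
  -- bounds for the trajectories and for f
  obtain ⟨Rx, hRx⟩ := (hIccT.image_of_continuousOn hxc).isBounded.subset_closedBall 0
  obtain ⟨Rxh, hRxh⟩ := (hIccT.image_of_continuousOn hxhc).isBounded.subset_closedBall 0
  obtain ⟨Ry, hRy⟩ := (hIccT.image_of_continuousOn hyc).isBounded.subset_closedBall 0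
  obtain ⟨Ryh, hRyh⟩ := (hIccT.image_of_continuousOn hyhc).isBounded.subset_closedBall 0
  obtain ⟨M, hM⟩ := hIccT.exists_bound_of_continuousOn hfc
  have hM0 : 0 ≤ M := le_trans (norm_nonneg _) (hM 0 ⟨le_refl 0, hT⟩)
  set B0 : ℝ := max (max Rx Rxh) (max Ry Ryh) with hB0
  set R : ℝ := max B0 0 + M with hR
  have hR0 : 0 ≤ R := by positivity
  have hnormx : ∀ t ∈ Set.Icc (0:ℝ) T, ‖x t‖ ≤ max B0 0 := fun t ht => le_trans
    (by simpa [dist_zero_right] using hRx (Set.mem_image_of_mem x ht))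
    (le_max_of_le_left (le_max_of_le_left (le_max_left _ _)))
  have hnormxh : ∀ t ∈ Set.Icc (0:ℝ) T, ‖xh t‖ ≤ max B0 0 := fun t ht => le_trans
    (by simpa [dist_zero_right] using hRxh (Set.mem_image_of_mem xh ht))
    (le_max_of_le_left (le_max_of_le_left (le_max_right _ _)))
  have hnormy : ∀ t ∈ Set.Icc (0:ℝ) T, ‖y t‖ ≤ max B0 0 := fun t ht => le_trans
    (by simpa [dist_zero_right] using hRy (Set.mem_image_of_mem y ht))
    (le_max_of_le_left (le_max_of_le_right (le_max_left _ _)))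
  have hnormyh : ∀ t ∈ Set.Icc (0:ℝ) T, ‖yh t‖ ≤ max B0 0 := fun t ht => le_trans
    (by simpa [dist_zero_right] using hRyh (Set.mem_image_of_mem yh ht))
    (le_max_of_le_left (le_max_of_le_right (le_max_right _ _)))
  have hball : ∀ (z : Fin n → ℝ) (c : ℝ), ‖z‖ ≤ max B0 0 → |c| ≤ M →
      (fun j => z j + c) ∈ Metric.closedBall (0 : Fin n → ℝ) R := by
    intro z c hz hc
    rw [Metric.mem_closedBall, dist_zero_right]
    refine (pi_norm_le_iff_of_nonneg hR0).2 fun j => ?_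
    calc ‖z j + c‖ ≤ ‖z j‖ + ‖c‖ := norm_add_le _ _
      _ ≤ max B0 0 + M := add_le_add ((norm_le_pi_norm z j).trans hz)
          (by simpa [Real.norm_eq_abs] using hc)
  have hballz : ∀ (z : Fin n → ℝ), ‖z‖ ≤ max B0 0 →
      z ∈ Metric.closedBall (0 : Fin n → ℝ) R := by
    intro z hz
    rw [Metric.mem_closedBall, dist_zero_right]
    exact hz.trans (by linarith)
  -- a uniform Lipschitz constant on a compact tube
  set S : Set (((Fin n → ℝ) × (Fin m → ℝ)) × ((Fin n → ℝ) × (Fin m → ℝ))) :=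
    (Metric.closedBall 0 R ×ˢ Set.Icc wl wu) ×ˢ (Metric.closedBall 0 R ×ˢ Set.Icc wl wu)
    with hS
  have hScomp : IsCompact S :=
    ((isCompact_closedBall _ _).prod isCompact_Icc).prod
      ((isCompact_closedBall _ _).prod isCompact_Icc)
  obtain ⟨K, hK⟩ := myLocallyLipschitz_exists_lipschitzOnWith hdLip hScomp
  -- the Lipschitz estimate along shifted points
  have hLipStep : ∀ (i : Fin n) (B Bh : Fin n → ℝ) (ωB ωBh : Fin m → ℝ) (m0 : ℝ),
      0 ≤ m0 → m0 ≤ M → ‖B‖ ≤ max B0 0 → ‖Bh‖ ≤ max B0 0 →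
      ωB ∈ Set.Icc wl wu → ωBh ∈ Set.Icc wl wu →
      d (fun j => B j + m0) ωB (fun j => Bh j - m0) ωBh i ≤ d B ωB Bh ωBh i + K * m0 := by
    intro i B Bh ωB ωBh m0 hm0 hm0M hB hBh hωB hωBh
    set P : ((Fin n → ℝ) × (Fin m → ℝ)) × ((Fin n → ℝ) × (Fin m → ℝ)) :=
      ((fun j => B j + m0, ωB), (fun j => Bh j - m0, ωBh)) with hP
    set Q : ((Fin n → ℝ) × (Fin m → ℝ)) × ((Fin n → ℝ) × (Fin m → ℝ)) :=
      ((B, ωB), (Bh, ωBh)) with hQ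
    have hPS : P ∈ S := by
      refine ⟨⟨hball B m0 hB (by rwa [abs_of_nonneg hm0]), hωB⟩, ⟨?_, hωBh⟩⟩
      have := hball Bh (-m0) hBh (by rwa [abs_neg, abs_of_nonneg hm0])
      simpa [hP, sub_eq_add_neg] using this
    have hQS : Q ∈ S := ⟨⟨hballz B hB, hωB⟩, ⟨hballz Bh hBh, hωBh⟩⟩
    have hdistPQ : dist P Q ≤ m0 := by
      rw [Prod.dist_eq]
      refine max_le ?_ ?_ <;> rw [Prod.dist_eq] <;> refine max_le ?_ (by simp [hP, hQ, hm0])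
      · refine (dist_pi_le_iff hm0).2 fun j => ?_
        simp [hP, hQ, Real.dist_eq, abs_of_nonneg hm0]
      · refine (dist_pi_le_iff hm0).2 fun j => ?_
        simp [hP, hQ, Real.dist_eq, abs_of_nonneg hm0]
    have hKd := hK.dist_le_mul P hPS Q hQS
    have h1 : dist (d P.1.1 P.1.2 P.2.1 P.2.2) (d Q.1.1 Q.1.2 Q.2.1 Q.2.2) ≤ K * m0 :=
      hKd.trans (mul_le_mul_of_nonneg_left hdistPQ K.coe_nonneg)
    have h2 := (dist_le_pi_dist (d P.1.1 P.1.2 P.2.1 P.2.2) (d Q.1.1 Q.1.2 Q.2.1 Q.2.2) i).trans h1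
    rw [Real.dist_eq] at h2
    have := abs_le.1 h2
    have := sub_le_iff_le_add.1 this.2
    simpa [hP, hQ] using this.trans (le_of_eq (add_comm _ _))
  -- derivative bound at active indices
  have hderiv : ∀ t ∈ Set.Icc (0:ℝ) T, ∀ j, ∃ D, HasDerivAt (u j) D t ∧
      (u j t = f t → D ≤ K * f t) := by
    intro t ht j
    have hfM : f t ≤ M := le_trans (le_abs_self _) (by simpa [Real.norm_eq_abs] using hM t ht)
    match j with
    | none =>
      refine ⟨0, hasDerivAt_const t 0, fun hact => ?_⟩
      have : f t = 0 := hact.symm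
      simp [this]
    | some (Sum.inl i) =>
      refine ⟨_, ((hasDerivAt_pi.1 (hx t ht)) i).sub ((hasDerivAt_pi.1 (hy t ht)) i), ?_⟩
      intro hact
      have hLip' := hLipStep i (y t) (yh t) (v t) (vh t) (f t) (hf0 t) hfM
        (hnormy t ht) (hnormyh t ht) (hvmem t ht) (hvhmem t ht)
      have key := key_estimate wl wu d hxm hxhm hwm hwhm i (x t) (y t) (xh t) (yh t)
        (w t) (v t) (wh t) (vh t) (hwmem t ht) (hvmem t ht) (hwhmem t ht) (hvhmem t ht)
        (f t)
        (fun j => by linarith [hlex t j])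
        (by have : x t i - y t i = f t := hact; linarith)
        (fun j => by linarith [hleyh t j])
        (hinSE t ht).1 (hinSE t ht).2 (K * f t) hLip'
      linarith
    | some (Sum.inr i) =>
      refine ⟨_, ((hasDerivAt_pi.1 (hyh t ht)) i).sub ((hasDerivAt_pi.1 (hxh t ht)) i), ?_⟩
      intro hact
      have hLip' := hLipStep i (xh t) (x t) (wh t) (w t) (f t) (hf0 t) hfM
        (hnormxh t ht) (hnormx t ht) (hwhmem t ht) (hwmem t ht)
      have key := key_estimate wl wu d hxm hxhm hwm hwhm i (yh t) (xh t) (y t) (x t)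
        (vh t) (wh t) (v t) (w t) (hvhmem t ht) (hwhmem t ht) (hvmem t ht) (hwmem t ht)
        (f t)
        (fun j => by linarith [hleyh t j])
        (by have : yh t i - xh t i = f t := hact; linarith)
        (fun j => by linarith [hlex t j])
        (hinSE t ht).2 (hinSE t ht).1 (K * f t) hLip'
      linarith
  -- Gronwall
  have hg := le_gronwallBound_of_liminf_deriv_right_le (f := f) (f' := fun t => (K : ℝ) * f t)
    (δ := 0) (K := (K : ℝ)) (ε := 0) hfc ?_ hfa (fun s hs => by simp)
  · intro t ht
    have hft : f t ≤ 0 := by simpa [gronwallBound_ε0_δ0] using hg t ht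
    constructor
    · intro i
      have := hle t (some (Sum.inl i))
      have : x t i - y t i ≤ f t := this
      linarith
    · intro i
      have := hle t (some (Sum.inr i))
      have : yh t i - xh t i ≤ f t := this
      linarith
  · -- the slope condition
    intro t ht r hr
    have ht' : t ∈ Set.Icc (0:ℝ) T := ⟨ht.1, le_of_lt ht.2⟩
    have hr0 : 0 < r := lt_of_le_of_lt (mul_nonneg K.coe_nonneg (hf0 t)) hr
    have hev : ∀ j, ∀ᶠ z in 𝓝[>] t, u j z - f t < r * (z - t) := by
      intro j
      obtain ⟨D, hD, hDle⟩ := hderiv t ht' j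
      rcases eq_or_lt_of_le (hle t j) with hact | hlt
      · have hDr : D < r := lt_of_le_of_lt (hDle hact) hr
        have hslope : ∀ᶠ z in 𝓝[≠] t, slope (u j) t z < r :=
          (hasDerivAt_iff_tendsto_slope.1 hD).eventually_lt_const hDr
        have hslope' : ∀ᶠ z in 𝓝[>] t, slope (u j) t z < r :=
          hslope.filter_mono (nhdsWithin_mono t fun z hz => ne_of_gt hz)
        filter_upwards [hslope', self_mem_nhdsWithin] with z hz hzt
        have hzt' : (0:ℝ) < z - t := sub_pos.2 hzt
        rw [slope_def_field, div_lt_iff₀ hzt'] at hz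
        have : u j t = f t := hact
        linarith
      · have hc : ContinuousAt (u j) t := hD.continuousAt
        have hev' : ∀ᶠ z in 𝓝 t, u j z < f t := Filter.Tendsto.eventually_lt_const hlt hc
        filter_upwards [hev'.filter_mono nhdsWithin_le_nhds, self_mem_nhdsWithin] with z hz hzt
        nlinarith [mul_pos hr0 (sub_pos.2 (show t < z from hzt))]
    have hall : ∀ᶠ z in 𝓝[>] t, ∀ j, u j z - f t < r * (z - t) := eventually_all.2 hev
    refine ((hall.and self_mem_nhdsWithin).mono ?_).frequently
    rintro z ⟨hz, hzt⟩
    have hzt' : (0:ℝ) < z - t := sub_pos.2 hzt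
    have hfz : f z - f t < r * (z - t) := by
      have : f z < f t + r * (z - t) := by
        apply (Finset.sup'_lt_iff hne).2
        intro j _
        linarith [hz j]
      linarith
    rw [inv_mul_eq_div, div_lt_iff₀ hzt']
    linarith
end

section
/- (Proposition 1) Suppose F is mixed-monotone with respect to a decomposition function d. Let x : [0, T] → ℝⁿ be a solution of ẋ = F(x, w(t)) under a piecewise continuous disturbance w : [0, T] → 𝒲, and let (a, â) : [0, T] → ℝⁿ × ℝⁿ be a solution of the deterministic embedding ODE (ȧ, ȧ̂) = e(a, â) := (d(a, w̲, â, w̄), d(â, w̄, a, w̲)). If a(0) ⪯ x(0) ⪯ â(0) componentwise, then a(T) ⪯ x(T) ⪯ â(T); in particular the reachable set of [a(0), â(0)] at time T is contained in the hyperrectangle [a(T), â(T)]. -/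
open Set Function Filter Topology

open Metric

/-- Chaining single-coordinate monotonicity steps. -/
lemma chain_update_mono {k : ℕ} (f : (Fin k → ℝ) → ℝ) (u v : Fin k → ℝ)
    (hstep : ∀ (j : Fin k) (z : Fin k → ℝ), (∀ i, z i = u i ∨ z i = v i) →
      f (Function.update z j (u j)) ≤ f (Function.update z j (v j))) :
    f u ≤ f v := by
  set g : ℕ → (Fin k → ℝ) := fun l j => if (j : ℕ) < l then v j else u j with hg
  have hmem : ∀ l i, g l i = u i ∨ g l i = v i := by
    intro l i
    by_cases h : (i : ℕ) < l <;> simp [hg, h]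
  have hstep' : ∀ l, f (g l) ≤ f (g (l + 1)) := by
    intro l
    by_cases hl : l < k
    · set j0 : Fin k := ⟨l, hl⟩ with hj0
      have hA : g l = Function.update (g (l+1)) j0 (u j0) := by
        funext j
        rcases eq_or_ne j j0 with rfl | hj
        · simp [hg, Function.update_self, hj0]
        · have hjv : (j : ℕ) ≠ l := by
            intro h; apply hj; exact Fin.ext h
          have : ((j : ℕ) < l + 1) ↔ ((j : ℕ) < l) := by
            omega
          have h' : ((j : ℕ) ≤ l) ↔ ((j : ℕ) < l) := by
            omega
          simp [hg, Function.update_of_ne hj, this, h']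
      have hB : g (l+1) = Function.update (g (l+1)) j0 (v j0) := by
        funext j
        rcases eq_or_ne j j0 with rfl | hj
        · simp [hg, Function.update_self, hj0]
        · simp [Function.update_of_ne hj]
      calc f (g l) = f (Function.update (g (l+1)) j0 (u j0)) := by rw [← hA]
        _ ≤ f (Function.update (g (l+1)) j0 (v j0)) := hstep j0 (g (l+1)) (hmem (l+1))
        _ = f (g (l+1)) := by rw [← hB]
    · have : g l = g (l + 1) := by
        funext j
        have := j.isLt
        have h1 : (j : ℕ) < l := by omega
        have h2 : (j : ℕ) < l + 1 := by omega
        simp [hg, h1, h2]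
      rw [this]
  have hchain : ∀ l, f (g 0) ≤ f (g l) := by
    intro l
    induction l with
    | zero => exact le_refl _
    | succ l ih => exact ih.trans (hstep' l)
  have h0 : g 0 = u := by funext j; simp [hg]
  have hk : g k = v := by funext j; simp [hg, j.isLt]
  have := hchain k
  rwa [h0, hk] at this


lemma locallyLipschitz_exists_bound {α β : Type*} [MetricSpace α] [MetricSpace β]
    {f : α → β} (hf : LocallyLipschitz f) {s : Set α} (hs : IsCompact s) :
    ∃ K : ℝ, 0 ≤ K ∧ ∀ p ∈ s, ∀ q ∈ s, dist (f p) (f q) ≤ K * dist p q := by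
  rcases s.eq_empty_or_nonempty with rfl | hne
  · exact ⟨0, le_refl 0, by simp⟩
  have hfc : Continuous f := hf.continuous
  choose Kl t ht hlip using hf
  have hball : ∀ x : α, ∃ r > 0, ball x r ⊆ t x := fun x => Metric.mem_nhds_iff.mp (ht x)
  choose r hr hrsub using hball
  -- finite subcover by balls of radius r x / 2
  obtain ⟨I, hIs, hcover⟩ := hs.elim_nhds_subcover (fun x => ball x (r x / 2))
    (fun x _ => ball_mem_nhds x (half_pos (hr x)))
  have hInon : I.Nonempty := by
    rcases hne with ⟨p, hp⟩
    rcases mem_iUnion₂.mp (hcover hp) with ⟨x, hxI, _⟩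
    exact ⟨x, hxI⟩
  set δ : ℝ := I.inf' hInon (fun x => r x / 2) with hδ
  have hδpos : 0 < δ := by
    rw [hδ, Finset.lt_inf'_iff]
    intro x _; exact half_pos (hr x)
  set Km : ℝ := I.sup' hInon (fun x => (Kl x : ℝ)) with hKm
  -- bound on the image
  have hbc : Bornology.IsBounded (f '' s) := (hs.image hfc).isBounded
  obtain ⟨C, hC⟩ := hbc.subset_closedBall (f hne.some)
  have hM : ∀ p ∈ s, ∀ q ∈ s, dist (f p) (f q) ≤ 2 * max C 0 := by
    intro p hp q hq
    have h1 := hC (mem_image_of_mem f hp)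
    have h2 := hC (mem_image_of_mem f hq)
    rw [mem_closedBall] at h1 h2
    calc dist (f p) (f q) ≤ dist (f p) (f hne.some) + dist (f hne.some) (f q) :=
          dist_triangle _ _ _
      _ ≤ C + C := add_le_add h1 (by rwa [dist_comm])
      _ ≤ max C 0 + max C 0 := add_le_add (le_max_left _ _) (le_max_left _ _)
      _ = 2 * max C 0 := by ring
  set M : ℝ := 2 * max C 0 with hMdef
  have hM0 : 0 ≤ M := by positivity
  refine ⟨max (max Km (M / δ)) 0, le_max_right _ _, ?_⟩
  set K : ℝ := max (max Km (M / δ)) 0 with hKdef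
  intro p hp q hq
  rcases mem_iUnion₂.mp (hcover hp) with ⟨x, hxI, hpx⟩
  have hpx' : dist p x < r x / 2 := mem_ball.mp hpx
  by_cases hd : dist p q < r x / 2
  · have hpt : p ∈ t x := hrsub x (mem_ball.mpr (lt_of_lt_of_le hpx' (by linarith [hr x])))
    have hqt : q ∈ t x := by
      apply hrsub x
      rw [mem_ball]
      calc dist q x ≤ dist q p + dist p x := dist_triangle _ _ _
        _ < r x / 2 + r x / 2 := by rw [dist_comm q p]; exact add_lt_add hd hpx'
        _ = r x := by ring
    have := (hlip x).dist_le_mul p hpt q hqt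
    calc dist (f p) (f q) ≤ Kl x * dist p q := this
      _ ≤ K * dist p q := by
        apply mul_le_mul_of_nonneg_right _ dist_nonneg
        calc (Kl x : ℝ) ≤ Km := Finset.le_sup' (fun y => (Kl y : ℝ)) hxI
          _ ≤ K := le_trans (le_max_left _ _) (le_max_left _ _)
  · push_neg at hd
    have hδd : δ ≤ dist p q := le_trans (Finset.inf'_le _ hxI) hd
    calc dist (f p) (f q) ≤ M := hM p hp q hq
      _ = (M / δ) * δ := by field_simp
      _ ≤ (M / δ) * dist p q := by
          apply mul_le_mul_of_nonneg_left hδd (by positivity)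
      _ ≤ K * dist p q := by
          apply mul_le_mul_of_nonneg_right _ dist_nonneg
          exact le_trans (le_max_right _ _) (le_max_left _ _)


section chains
set_option linter.unusedVariables false
variable {n m : ℕ} {wl wu : Fin m → ℝ}
  {F : (Fin n → ℝ) → (Fin m → ℝ) → (Fin n → ℝ)}
  {d : (Fin n → ℝ) → (Fin m → ℝ) → (Fin n → ℝ) → (Fin m → ℝ) → (Fin n → ℝ)}

lemma mem_Icc_of_choices {u v : Fin m → ℝ} (hu : u ∈ Set.Icc wl wu) (hv : v ∈ Set.Icc wl wu)
    {z : Fin m → ℝ} (hz : ∀ k, z k = u k ∨ z k = v k) : z ∈ Set.Icc wl wu := by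
  constructor <;> intro k <;> rcases hz k with h | h <;> rw [h]
  · exact hu.1 k
  · exact hv.1 k
  · exact hu.2 k
  · exact hv.2 k

lemma chain_low (hd : IsDecompositionFunction wl wu F d) (hwlu : wl ≤ wu)
    (A Ah X : Fin n → ℝ) (W : Fin m → ℝ) (hW : W ∈ Set.Icc wl wu)
    (v : ℝ) (i : Fin n)
    (hA : ∀ j, A j ≤ X j + v) (hAi : A i = X i + v)
    (hAh : ∀ j, X j - v ≤ Ah j) :
    d A wl Ah wu i ≤ d (fun j => X j + v) W (fun j => X j - v) W i := by
  obtain ⟨-, -, hxm, hxhm, hwm, hwhm⟩ := hd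
  have hwlW : wl ∈ Set.Icc wl wu := ⟨le_refl _, hwlu⟩
  have hwuW : wu ∈ Set.Icc wl wu := ⟨hwlu, le_refl _⟩
  have step1 : d A wl Ah wu i ≤ d (fun j => X j + v) wl Ah wu i := by
    apply chain_update_mono (fun z => d z wl Ah wu i) A (fun j => X j + v)
    intro j z hz
    rcases eq_or_ne j i with rfl | hj
    · simp only [hAi]; exact le_refl _
    · exact hxm i j hj z Ah (A j) (X j + v) (hA j) wl hwlW wu hwuW
  have step2 : d (fun j => X j + v) wl Ah wu i
      ≤ d (fun j => X j + v) wl (fun j => X j - v) wu i := by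
    have := chain_update_mono (fun z => - d (fun j => X j + v) wl z wu i)
      (fun j => X j - v) Ah (fun j z _ => by
        simp only [neg_le_neg_iff]
        exact hxhm i j (fun j => X j + v) z (X j - v) (Ah j) (hAh j) wl hwlW wu hwuW)
    simpa using this
  have step3 : d (fun j => X j + v) wl (fun j => X j - v) wu i
      ≤ d (fun j => X j + v) W (fun j => X j - v) wu i := by
    apply chain_update_mono (fun z => d (fun j => X j + v) z (fun j => X j - v) wu i) wl W
    intro k z hz
    exact hwm i k _ _ (wl k) (W k) (le_refl _) (hW.1 k) (hW.2 k) z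
      (mem_Icc_of_choices hwlW hW hz) wu hwuW
  have step4 : d (fun j => X j + v) W (fun j => X j - v) wu i
      ≤ d (fun j => X j + v) W (fun j => X j - v) W i := by
    have := chain_update_mono (fun z => - d (fun j => X j + v) W (fun j => X j - v) z i)
      W wu (fun k z hz => by
        simp only [neg_le_neg_iff]
        exact hwhm i k _ _ (W k) (wu k) (hW.1 k) (hW.2 k) (le_refl _) W hW z
          (mem_Icc_of_choices hW hwuW hz))
    simpa using this
  exact ((step1.trans step2).trans step3).trans step4

lemma chain_high (hd : IsDecompositionFunction wl wu F d) (hwlu : wl ≤ wu)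
    (A Ah X : Fin n → ℝ) (W : Fin m → ℝ) (hW : W ∈ Set.Icc wl wu)
    (v : ℝ) (i : Fin n)
    (hAh : ∀ j, X j - v ≤ Ah j) (hAhi : Ah i = X i - v)
    (hA : ∀ j, A j ≤ X j + v) :
    d (fun j => X j - v) W (fun j => X j + v) W i ≤ d Ah wu A wl i := by
  obtain ⟨-, -, hxm, hxhm, hwm, hwhm⟩ := hd
  have hwlW : wl ∈ Set.Icc wl wu := ⟨le_refl _, hwlu⟩
  have hwuW : wu ∈ Set.Icc wl wu := ⟨hwlu, le_refl _⟩
  have step1 : d (fun j => X j - v) wu A wl i ≤ d Ah wu A wl i := by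
    apply chain_update_mono (fun z => d z wu A wl i) (fun j => X j - v) Ah
    intro j z hz
    rcases eq_or_ne j i with rfl | hj
    · simp only [hAhi]; exact le_refl _
    · exact hxm i j hj z A (X j - v) (Ah j) (hAh j) wu hwuW wl hwlW
  have step2 : d (fun j => X j - v) wu (fun j => X j + v) wl i
      ≤ d (fun j => X j - v) wu A wl i := by
    have := chain_update_mono (fun z => - d (fun j => X j - v) wu z wl i)
      A (fun j => X j + v) (fun j z _ => by
        simp only [neg_le_neg_iff]
        exact hxhm i j (fun j => X j - v) z (A j) (X j + v) (hA j) wu hwuW wl hwlW)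
    simpa using this
  have step3 : d (fun j => X j - v) W (fun j => X j + v) wl i
      ≤ d (fun j => X j - v) wu (fun j => X j + v) wl i := by
    apply chain_update_mono (fun z => d (fun j => X j - v) z (fun j => X j + v) wl i) W wu
    intro k z hz
    exact hwm i k _ _ (W k) (wu k) (hW.1 k) (hW.2 k) (le_refl _) z
      (mem_Icc_of_choices hW hwuW hz) wl hwlW
  have step4 : d (fun j => X j - v) W (fun j => X j + v) W i
      ≤ d (fun j => X j - v) W (fun j => X j + v) wl i := by
    have := chain_update_mono (fun z => - d (fun j => X j - v) W (fun j => X j + v) z i)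
      wl W (fun k z hz => by
        simp only [neg_le_neg_iff]
        exact hwhm i k _ _ (wl k) (W k) (le_refl _) (hW.1 k) (hW.2 k) W hW z
          (mem_Icc_of_choices hwlW hW hz))
    simpa using this
  exact (step4.trans step3).trans (step2.trans step1)
end chains

/-- The finite family of comparison functions whose max we track. -/
def fam {n : ℕ} (a x ah : ℝ → Fin n → ℝ) (o : Option (Fin n × Bool)) (t : ℝ) : ℝ :=
  o.elim 0 (fun p => bif p.2 then x t p.1 - ah t p.1 else a t p.1 - x t p.1)

/-- The corresponding derivatives. -/
def famDeriv {n m : ℕ} (F : (Fin n → ℝ) → (Fin m → ℝ) → (Fin n → ℝ))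
    (d : (Fin n → ℝ) → (Fin m → ℝ) → (Fin n → ℝ) → (Fin m → ℝ) → (Fin n → ℝ))
    (wl wu : Fin m → ℝ) (w : ℝ → Fin m → ℝ) (a x ah : ℝ → Fin n → ℝ)
    (o : Option (Fin n × Bool)) (t : ℝ) : ℝ :=
  o.elim 0 (fun p => bif p.2 then F (x t) (w t) p.1 - d (ah t) wu (a t) wl p.1
    else d (a t) wl (ah t) wu p.1 - F (x t) (w t) p.1)


/-- Proposition 1: trajectories of the deterministic embedding system
bound the reachable states of the original system: if `a(0) ⪯ x(0) ⪯ â(0)` then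
`a(T) ⪯ x(T) ⪯ â(T)`, for any piecewise continuous disturbance valued in `𝒲`; in
particular `R^F(T; [a(0), â(0)]) ⊆ [a(T), â(T)]`. -/
theorem reachable_set_overapproximation
    {n m : ℕ} (wl wu : Fin m → ℝ) (hwlu : wl ≤ wu)
    (F : (Fin n → ℝ) → (Fin m → ℝ) → (Fin n → ℝ))
    (d : (Fin n → ℝ) → (Fin m → ℝ) → (Fin n → ℝ) → (Fin m → ℝ) → (Fin n → ℝ))
    (hd : IsDecompositionFunction wl wu F d)
    (T : ℝ) (hT : 0 ≤ T)
    (w : ℝ → (Fin m → ℝ))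
    (hwmem : ∀ t ∈ Set.Icc (0:ℝ) T, w t ∈ Set.Icc wl wu)
    (hwpc : PiecewiseContinuousOn w (Set.Icc 0 T))
    -- x is a solution of ẋ = F(x, w(t)) on [0, T]
    (x : ℝ → (Fin n → ℝ))
    (hx : ∀ t ∈ Set.Icc (0:ℝ) T, HasDerivAt x (F (x t) (w t)) t)
    -- (a, ah) is a solution of the deterministic embedding ODE on [0, T]
    (a ah : ℝ → (Fin n → ℝ))
    (ha : ∀ t ∈ Set.Icc (0:ℝ) T, HasDerivAt a (d (a t) wl (ah t) wu) t)
    (hah : ∀ t ∈ Set.Icc (0:ℝ) T, HasDerivAt ah (d (ah t) wu (a t) wl) t)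
    (h0 : a 0 ≤ x 0 ∧ x 0 ≤ ah 0) :
    a T ≤ x T ∧ x T ≤ ah T := by
  classical
  have h0T : (0:ℝ) ∈ Set.Icc (0:ℝ) T := ⟨le_refl _, hT⟩
  have hTT : T ∈ Set.Icc (0:ℝ) T := ⟨hT, le_refl _⟩
  -- component derivatives
  have hder : ∀ (o : Option (Fin n × Bool)), ∀ t ∈ Set.Icc (0:ℝ) T,
      HasDerivAt (fam a x ah o) (famDeriv F d wl wu w a x ah o t) t := by
    rintro (_ | ⟨i, _ | _⟩) t ht
    · exact hasDerivAt_const t 0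
    · exact (((ContinuousLinearMap.proj i).hasFDerivAt.comp_hasDerivAt t (ha t ht)).sub
        ((ContinuousLinearMap.proj i).hasFDerivAt.comp_hasDerivAt t (hx t ht)))
    · exact (((ContinuousLinearMap.proj i).hasFDerivAt.comp_hasDerivAt t (hx t ht)).sub
        ((ContinuousLinearMap.proj i).hasFDerivAt.comp_hasDerivAt t (hah t ht)))
  -- the max function
  have hne : (Finset.univ : Finset (Option (Fin n × Bool))).Nonempty :=
    ⟨none, Finset.mem_univ none⟩
  set f : ℝ → ℝ := fun t => Finset.univ.sup' hne (fun o => fam a x ah o t) with hfdef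
  have hfam_le : ∀ (o : Option (Fin n × Bool)) (t : ℝ), fam a x ah o t ≤ f t :=
    fun o t => Finset.le_sup' (fun o => fam a x ah o t) (Finset.mem_univ o)
  have hf_nonneg : ∀ t, 0 ≤ f t := fun t => hfam_le none t
  -- bounds on trajectories
  obtain ⟨Cx, hCx⟩ := isCompact_Icc.exists_bound_of_continuousOn
    (fun t ht => (hx t ht).continuousAt.continuousWithinAt)
  obtain ⟨Ca, hCa⟩ := isCompact_Icc.exists_bound_of_continuousOn
    (fun t ht => (ha t ht).continuousAt.continuousWithinAt)
  obtain ⟨Cah, hCah⟩ := isCompact_Icc.exists_bound_of_continuousOn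
    (fun t ht => (hah t ht).continuousAt.continuousWithinAt)
  have hCx0 : 0 ≤ Cx := le_trans (norm_nonneg _) (hCx 0 h0T)
  have hCa0 : 0 ≤ Ca := le_trans (norm_nonneg _) (hCa 0 h0T)
  have hCah0 : 0 ≤ Cah := le_trans (norm_nonneg _) (hCah 0 h0T)
  set B : ℝ := Ca + Cah + 2 * Cx with hBdef
  have hB0 : 0 ≤ B := by positivity
  have hfB : ∀ t ∈ Set.Icc (0:ℝ) T, f t ≤ B := by
    intro t ht
    apply Finset.sup'_le
    rintro (_ | ⟨i, b⟩) -
    · exact hB0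
    · have h1 : |a t i| ≤ Ca := le_trans (norm_le_pi_norm (a t) i) (hCa t ht)
      have h2 : |x t i| ≤ Cx := le_trans (norm_le_pi_norm (x t) i) (hCx t ht)
      have h3 : |ah t i| ≤ Cah := le_trans (norm_le_pi_norm (ah t) i) (hCah t ht)
      cases b
      · show a t i - x t i ≤ B
        have := le_abs_self (a t i); have := neg_abs_le (x t i)
        rw [hBdef]; linarith
      · show x t i - ah t i ≤ B
        have := le_abs_self (x t i); have := neg_abs_le (ah t i)
        rw [hBdef]; linarith
  set R : ℝ := Cx + B with hRdef
  have hR0 : 0 ≤ R := by positivity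
  -- Lipschitz constant on a big compact set
  set S : Set (((Fin n → ℝ) × (Fin m → ℝ)) × ((Fin n → ℝ) × (Fin m → ℝ))) :=
    (closedBall (0 : Fin n → ℝ) R ×ˢ Set.Icc wl wu) ×ˢ
      (closedBall (0 : Fin n → ℝ) R ×ˢ Set.Icc wl wu) with hSdef
  have hScomp : IsCompact S :=
    ((isCompact_closedBall _ _).prod isCompact_Icc).prod
      ((isCompact_closedBall _ _).prod isCompact_Icc)
  obtain ⟨K, hK0, hKlip⟩ := locallyLipschitz_exists_bound hd.1 hScomp
  -- specialized Lipschitz estimate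
  have hnormR : ∀ t ∈ Set.Icc (0:ℝ) T, ∀ (y : Fin n → ℝ) (vv : ℝ), 0 ≤ vv → vv ≤ B →
      (∀ j, |y j - x t j| ≤ vv) → y ∈ closedBall (0 : Fin n → ℝ) R := by
    intro t ht y vv h0v hvB hy
    rw [mem_closedBall_zero_iff]
    rw [pi_norm_le_iff_of_nonneg hR0]
    intro j
    have h2 : |x t j| ≤ Cx := le_trans (norm_le_pi_norm (x t) j) (hCx t ht)
    have := hy j
    rw [Real.norm_eq_abs]
    have : |y j| ≤ |x t j| + vv := by
      have h4 := abs_sub_abs_le_abs_sub (y j) (x t j)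
      linarith [hy j]
    rw [hRdef]; linarith
  have hLipEst : ∀ t ∈ Set.Icc (0:ℝ) T, ∀ (y1 y2 : Fin n → ℝ) (vv : ℝ), 0 ≤ vv → vv ≤ B →
      (∀ j, |y1 j - x t j| ≤ vv) → (∀ j, |y2 j - x t j| ≤ vv) → ∀ i,
      |d y1 (w t) y2 (w t) i - d (x t) (w t) (x t) (w t) i| ≤ K * vv := by
    intro t ht y1 y2 vv h0v hvB hy1 hy2 i
    have hwt := hwmem t ht
    have hxB : x t ∈ closedBall (0 : Fin n → ℝ) R :=
      hnormR t ht (x t) vv h0v hvB (fun j => by simpa using h0v)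
    have hp : ((y1, w t), (y2, w t)) ∈ S :=
      ⟨⟨hnormR t ht y1 vv h0v hvB hy1, hwt⟩, ⟨hnormR t ht y2 vv h0v hvB hy2, hwt⟩⟩
    have hq : ((x t, w t), (x t, w t)) ∈ S := ⟨⟨hxB, hwt⟩, ⟨hxB, hwt⟩⟩
    have hdist : dist (((y1, w t), (y2, w t)) :
        ((Fin n → ℝ) × (Fin m → ℝ)) × ((Fin n → ℝ) × (Fin m → ℝ)))
        ((x t, w t), (x t, w t)) ≤ vv := by
      rw [Prod.dist_eq]
      apply max_le <;> rw [Prod.dist_eq] <;> apply max_le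
      · rw [dist_pi_le_iff h0v]; intro j; rw [Real.dist_eq]; exact hy1 j
      · simpa using h0v
      · rw [dist_pi_le_iff h0v]; intro j; rw [Real.dist_eq]; exact hy2 j
      · simpa using h0v
    have hKd := hKlip _ hp _ hq
    have h1 : dist (d y1 (w t) y2 (w t) i) (d (x t) (w t) (x t) (w t) i)
        ≤ dist (d y1 (w t) y2 (w t)) (d (x t) (w t) (x t) (w t)) :=
      dist_le_pi_dist _ _ i
    rw [← Real.dist_eq]
    calc dist (d y1 (w t) y2 (w t) i) (d (x t) (w t) (x t) (w t) i)
        ≤ dist (d y1 (w t) y2 (w t)) (d (x t) (w t) (x t) (w t)) := h1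
      _ ≤ K * dist (((y1, w t), (y2, w t)) :
            ((Fin n → ℝ) × (Fin m → ℝ)) × ((Fin n → ℝ) × (Fin m → ℝ)))
            ((x t, w t), (x t, w t)) := hKd
      _ ≤ K * vv := mul_le_mul_of_nonneg_left hdist hK0
  -- key derivative bound at active indices
  have hkey : ∀ t ∈ Set.Icc (0:ℝ) T, ∀ (o : Option (Fin n × Bool)),
      fam a x ah o t = f t → famDeriv F d wl wu w a x ah o t ≤ K * f t := by
    intro t ht o heq
    have hwt := hwmem t ht
    have hv0 : 0 ≤ f t := hf_nonneg t
    have hvB : f t ≤ B := hfB t ht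
    have hA : ∀ j, a t j ≤ x t j + f t := by
      intro j; have := hfam_le (some (j, false)) t
      simp only [fam, Option.elim, cond_false] at this; linarith
    have hAh : ∀ j, x t j - f t ≤ ah t j := by
      intro j; have := hfam_le (some (j, true)) t
      simp only [fam, Option.elim, cond_true] at this; linarith
    have hdiag : d (x t) (w t) (x t) (w t) = F (x t) (w t) := hd.2.1 (x t) (w t) hwt
    match o with
    | none =>
      show (0:ℝ) ≤ K * f t
      exact mul_nonneg hK0 hv0
    | some (i, false) =>
      have hvo : a t i - x t i = f t := heq
      show d (a t) wl (ah t) wu i - F (x t) (w t) i ≤ K * f t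
      have hchain := chain_low hd hwlu (a t) (ah t) (x t) (w t) hwt (f t) i hA
        (by linarith) hAh
      have hlip := hLipEst t ht (fun j => x t j + f t) (fun j => x t j - f t) (f t)
        hv0 hvB (fun j => by simp [abs_of_nonneg hv0])
        (fun j => by simp [abs_of_nonneg hv0]) i
      have h3 : F (x t) (w t) i = d (x t) (w t) (x t) (w t) i := by rw [hdiag]
      have h4 := le_abs_self (d (fun j => x t j + f t) (w t) (fun j => x t j - f t) (w t) i
        - d (x t) (w t) (x t) (w t) i)
      linarith
    | some (i, true) =>
      have hvo : x t i - ah t i = f t := heq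
      show F (x t) (w t) i - d (ah t) wu (a t) wl i ≤ K * f t
      have hchain := chain_high hd hwlu (a t) (ah t) (x t) (w t) hwt (f t) i hAh
        (by linarith) hA
      have hlip := hLipEst t ht (fun j => x t j - f t) (fun j => x t j + f t) (f t)
        hv0 hvB (fun j => by simp [abs_of_nonneg hv0])
        (fun j => by simp [abs_of_nonneg hv0]) i
      have h3 : F (x t) (w t) i = d (x t) (w t) (x t) (w t) i := by rw [hdiag]
      have h4 := neg_abs_le (d (fun j => x t j - f t) (w t) (fun j => x t j + f t) (w t) i
        - d (x t) (w t) (x t) (w t) i)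
      linarith
  -- Gronwall
  have hcont : ContinuousOn f (Set.Icc 0 T) := by
    intro t ht
    exact (ContinuousAt.finset_sup'_apply hne
      (fun o _ => (hder o t ht).continuousAt)).continuousWithinAt
  have hslope : ∀ t ∈ Set.Ico (0:ℝ) T, ∀ r, K * f t < r →
      ∃ᶠ z in 𝓝[>] t, (z - t)⁻¹ * (f z - f t) < r := by
    intro t ht r hr
    have htIcc : t ∈ Set.Icc (0:ℝ) T := ⟨ht.1, le_of_lt ht.2⟩
    have hev : ∀ o : Option (Fin n × Bool),
        ∀ᶠ z in 𝓝[>] t, fam a x ah o z < f t + r * (z - t) := by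
      intro o
      rcases lt_or_eq_of_le (hfam_le o t) with hlt | heq
      · have h1 : Tendsto (fun z => fam a x ah o z) (𝓝[>] t) (𝓝 (fam a x ah o t)) :=
          ((hder o t htIcc).continuousAt.tendsto).mono_left nhdsWithin_le_nhds
        have h2 : Tendsto (fun z => f t + r * (z - t)) (𝓝[>] t) (𝓝 (f t + r * (t - t))) := by
          apply Tendsto.mono_left _ nhdsWithin_le_nhds
          exact (tendsto_const_nhds.add (((continuous_id.sub continuous_const).continuousAt).tendsto.const_mul r))
        exact h1.eventually_lt h2 (by simpa using hlt)
      · have hb : famDeriv F d wl wu w a x ah o t ≤ K * f t := hkey t htIcc o heq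
        have hsl := hasDerivAt_iff_tendsto_slope.mp (hder o t htIcc)
        have hm : 𝓝[>] t ≤ 𝓝[≠] t :=
          nhdsWithin_mono t (fun z hz => ne_of_gt hz)
        have hev' := (hsl.mono_left hm).eventually_lt_const (lt_of_le_of_lt hb hr)
        filter_upwards [hev', self_mem_nhdsWithin] with z hz1 hz2
        have hzt : (0:ℝ) < z - t := sub_pos.mpr hz2
        rw [slope_def_field] at hz1
        rw [div_lt_iff₀ hzt] at hz1
        have : fam a x ah o z < fam a x ah o t + r * (z - t) := by linarith
        rw [heq] at this
        exact this
    have hev2 : ∀ᶠ z in 𝓝[>] t, ∀ o : Option (Fin n × Bool),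
        fam a x ah o z < f t + r * (z - t) := eventually_all.mpr hev
    apply Filter.Eventually.frequently
    filter_upwards [hev2, self_mem_nhdsWithin] with z hz1 hz2
    have hzt : (0:ℝ) < z - t := sub_pos.mpr hz2
    have hfz : f z < f t + r * (z - t) := by
      rw [hfdef]
      rw [Finset.sup'_lt_iff]
      intro o _
      exact hz1 o
    rw [inv_mul_lt_iff₀ hzt]
    linarith
  have hstart : f 0 ≤ 0 := by
    apply Finset.sup'_le
    rintro (_ | ⟨i, b⟩) -
    · exact le_refl 0
    · cases b
      · show a 0 i - x 0 i ≤ 0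
        have := h0.1 i; linarith
      · show x 0 i - ah 0 i ≤ 0
        have := h0.2 i; linarith
  have hmain := le_gronwallBound_of_liminf_deriv_right_le (f := f) (f' := fun t => K * f t)
    (δ := 0) (K := K) (ε := 0) (a := 0) (b := T) hcont hslope hstart
    (fun s _ => by simp) T hTT
  rw [sub_zero, gronwallBound_ε0_δ0] at hmain
  constructor <;> intro i
  · have := le_trans (hfam_le (some (i, false)) T) hmain
    show a T i ≤ x T i
    simp only [fam, Option.elim, cond_false] at this; linarith
  · have := le_trans (hfam_le (some (i, true)) T) hmain
    show x T i ≤ ah T i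
    simp only [fam, Option.elim, cond_true] at this; linarith
end

section
/- (Lemma 2) Suppose F is mixed-monotone with respect to a decomposition function d. Define 𝒮 := {(x, x̂) ∈ ℝⁿ × ℝⁿ : x ⪯ x̂ and 0 ⪯_SE e(x, x̂)}, where e(x, x̂) = (d(x, w̲, x̂, w̄), d(x̂, w̄, x, w̲)) and 0 ⪯_SE e(x, x̂) means d(x, w̲, x̂, w̄) ⪰ 0 and d(x̂, w̄, x, w̲) ⪯ 0 componentwise. Let (a, â) : [0, ∞) → ℝⁿ × ℝⁿ be a solution of the deterministic embedding ODE with (a(0), â(0)) ∈ 𝒮. Then (a(t), â(t)) ∈ 𝒮 for all t ≥ 0, and (a(t₁), â(t₁)) ⪯_SE (a(t₂), â(t₂)) for all 0 ≤ t₁ ≤ t₂. -/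
open Set Function Filter Topology

section auxMono

variable {n m : ℕ} {wl wu : Fin m → ℝ}
  {d : (Fin n → ℝ) → (Fin m → ℝ) → (Fin n → ℝ) → (Fin m → ℝ) → (Fin n → ℝ)}

lemma MixedMono.monoX
    (hdx : ∀ (i j : Fin n), j ≠ i → ∀ (x xh : Fin n → ℝ) (s t : ℝ), s ≤ t →
        ∀ w ∈ Set.Icc wl wu, ∀ wh ∈ Set.Icc wl wu,
          d (Function.update x j s) w xh wh i ≤ d (Function.update x j t) w xh wh i)
    (i : Fin n) {x x' xh : Fin n → ℝ} (hxx : ∀ j, x j ≤ x' j) (hii : x i = x' i)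
    {w wh : Fin m → ℝ} (hw : w ∈ Set.Icc wl wu) (hwh : wh ∈ Set.Icc wl wu) :
    d x w xh wh i ≤ d x' w xh wh i := by
  have key : ∀ s : Finset (Fin n),
      d x w xh wh i ≤ d (fun j => if j ∈ s then x' j else x j) w xh wh i := by
    intro s
    induction s using Finset.induction_on with
    | empty => simp
    | @insert j s hj ih =>
      set g : Fin n → ℝ := fun j' => if j' ∈ s then x' j' else x j' with hgdef
      have hg : (fun j' => if j' ∈ insert j s then x' j' else x j')
          = Function.update g j (x' j) := by
        funext j'
        rcases eq_or_ne j' j with rfl | h1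
        · simp [Function.update, g]
        · simp [Function.update, h1, Finset.mem_insert, g]
      have hgj : g j = x j := by simp [g, hj]
      have hg0 : Function.update g j (x j) = g := by
        rw [← hgj, Function.update_eq_self]
      rcases eq_or_ne j i with rfl | hji
      · have : Function.update g j (x' j) = g := by
          rw [← hii, hg0]
        rw [hg, this]; exact ih
      · calc d x w xh wh i ≤ d g w xh wh i := ih
          _ = d (Function.update g j (x j)) w xh wh i := by rw [hg0]
          _ ≤ d (Function.update g j (x' j)) w xh wh i :=
              hdx i j hji g xh (x j) (x' j) (hxx j) w hw wh hwh
          _ = _ := by rw [hg]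
  have := key Finset.univ
  simpa using this

lemma MixedMono.monoXh
    (hdxh : ∀ (i j : Fin n) (x xh : Fin n → ℝ) (s t : ℝ), s ≤ t →
        ∀ w ∈ Set.Icc wl wu, ∀ wh ∈ Set.Icc wl wu,
          d x w (Function.update xh j t) wh i ≤ d x w (Function.update xh j s) wh i)
    (i : Fin n) {x xh xh' : Fin n → ℝ} (hxh : ∀ j, xh' j ≤ xh j)
    {w wh : Fin m → ℝ} (hw : w ∈ Set.Icc wl wu) (hwh : wh ∈ Set.Icc wl wu) :
    d x w xh wh i ≤ d x w xh' wh i := by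
  have key : ∀ s : Finset (Fin n),
      d x w xh wh i ≤ d x w (fun j => if j ∈ s then xh' j else xh j) wh i := by
    intro s
    induction s using Finset.induction_on with
    | empty => simp
    | @insert j s hj ih =>
      set g : Fin n → ℝ := fun j' => if j' ∈ s then xh' j' else xh j' with hgdef
      have hg : (fun j' => if j' ∈ insert j s then xh' j' else xh j')
          = Function.update g j (xh' j) := by
        funext j'
        rcases eq_or_ne j' j with rfl | h1
        · simp [Function.update, g]
        · simp [Function.update, h1, Finset.mem_insert, g]
      have hgj : g j = xh j := by simp [g, hj]
      have hg0 : Function.update g j (xh j) = g := by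
        rw [← hgj, Function.update_eq_self]
      calc d x w xh wh i ≤ d x w g wh i := ih
        _ = d x w (Function.update g j (xh j)) wh i := by rw [hg0]
        _ ≤ d x w (Function.update g j (xh' j)) wh i :=
            hdxh i j x g (xh' j) (xh j) (hxh j) w hw wh hwh
        _ = _ := by rw [hg]
  have := key Finset.univ
  simpa using this

lemma MixedMono.monoW
    (hdw : ∀ (i : Fin n) (k : Fin m) (x xh : Fin n → ℝ) (s t : ℝ),
        wl k ≤ s → s ≤ t → t ≤ wu k →
        ∀ w ∈ Set.Icc wl wu, ∀ wh ∈ Set.Icc wl wu,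
          d x (Function.update w k s) xh wh i ≤ d x (Function.update w k t) xh wh i)
    (i : Fin n) {x xh : Fin n → ℝ} {w w' wh : Fin m → ℝ}
    (hw : w ∈ Set.Icc wl wu) (hw' : w' ∈ Set.Icc wl wu) (hww : ∀ k, w k ≤ w' k)
    (hwh : wh ∈ Set.Icc wl wu) :
    d x w xh wh i ≤ d x w' xh wh i := by
  have key : ∀ s : Finset (Fin m),
      d x w xh wh i ≤ d x (fun k => if k ∈ s then w' k else w k) xh wh i := by
    intro s
    induction s using Finset.induction_on with
    | empty => simp
    | @insert k s hk ih =>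
      set g : Fin m → ℝ := fun k' => if k' ∈ s then w' k' else w k' with hgdef
      have hgbox : g ∈ Set.Icc wl wu := by
        constructor
        · intro k'
          by_cases h : k' ∈ s <;> simp [g, h, hw.1 k', hw'.1 k']
        · intro k'
          by_cases h : k' ∈ s <;> simp [g, h, hw.2 k', hw'.2 k']
      have hg : (fun k' => if k' ∈ insert k s then w' k' else w k')
          = Function.update g k (w' k) := by
        funext k'
        rcases eq_or_ne k' k with rfl | h1
        · simp [Function.update, g]
        · simp [Function.update, h1, Finset.mem_insert, g]
      have hgk : g k = w k := by simp [g, hk]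
      have hg0 : Function.update g k (w k) = g := by
        rw [← hgk, Function.update_eq_self]
      calc d x w xh wh i ≤ d x g xh wh i := ih
        _ = d x (Function.update g k (w k)) xh wh i := by rw [hg0]
        _ ≤ d x (Function.update g k (w' k)) xh wh i :=
            hdw i k x xh (w k) (w' k) (hw.1 k) (hww k) (hw'.2 k) g hgbox wh hwh
        _ = _ := by rw [hg]
  have := key Finset.univ
  simpa using this

lemma MixedMono.monoWh
    (hdwh : ∀ (i : Fin n) (k : Fin m) (x xh : Fin n → ℝ) (s t : ℝ),
        wl k ≤ s → s ≤ t → t ≤ wu k →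
        ∀ w ∈ Set.Icc wl wu, ∀ wh ∈ Set.Icc wl wu,
          d x w xh (Function.update wh k t) i ≤ d x w xh (Function.update wh k s) i)
    (i : Fin n) {x xh : Fin n → ℝ} {w wh wh' : Fin m → ℝ}
    (hw : w ∈ Set.Icc wl wu) (hwh : wh ∈ Set.Icc wl wu) (hwh' : wh' ∈ Set.Icc wl wu)
    (hww : ∀ k, wh' k ≤ wh k) :
    d x w xh wh i ≤ d x w xh wh' i := by
  have key : ∀ s : Finset (Fin m),
      d x w xh wh i ≤ d x w xh (fun k => if k ∈ s then wh' k else wh k) i := by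
    intro s
    induction s using Finset.induction_on with
    | empty => simp
    | @insert k s hk ih =>
      set g : Fin m → ℝ := fun k' => if k' ∈ s then wh' k' else wh k' with hgdef
      have hgbox : g ∈ Set.Icc wl wu := by
        constructor
        · intro k'
          by_cases h : k' ∈ s <;> simp [g, h, hwh.1 k', hwh'.1 k']
        · intro k'
          by_cases h : k' ∈ s <;> simp [g, h, hwh.2 k', hwh'.2 k']
      have hg : (fun k' => if k' ∈ insert k s then wh' k' else wh k')
          = Function.update g k (wh' k) := by
        funext k'
        rcases eq_or_ne k' k with rfl | h1
        · simp [Function.update, g]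
        · simp [Function.update, h1, Finset.mem_insert, g]
      have hgk : g k = wh k := by simp [g, hk]
      have hg0 : Function.update g k (wh k) = g := by
        rw [← hgk, Function.update_eq_self]
      calc d x w xh wh i ≤ d x w xh g i := ih
        _ = d x w xh (Function.update g k (wh k)) i := by rw [hg0]
        _ ≤ d x w xh (Function.update g k (wh' k)) i :=
            hdwh i k x xh (wh' k) (wh k) (hwh'.1 k) (hww k) (hwh.2 k) w hw g hgbox
        _ = _ := by rw [hg]
  have := key Finset.univ
  simpa using this

/-- The combined monotonicity property of a decomposition function. -/
lemma MixedMono.monoAll {F : (Fin n → ℝ) → (Fin m → ℝ) → (Fin n → ℝ)}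
    (hd : IsDecompositionFunction wl wu F d) (i : Fin n)
    {x x' xh xh' : Fin n → ℝ} {w w' wh wh' : Fin m → ℝ}
    (hx : ∀ j, x j ≤ x' j) (hxi : x i = x' i) (hxh : ∀ j, xh' j ≤ xh j)
    (hw : w ∈ Set.Icc wl wu) (hw' : w' ∈ Set.Icc wl wu) (hww : ∀ k, w k ≤ w' k)
    (hwh : wh ∈ Set.Icc wl wu) (hwh' : wh' ∈ Set.Icc wl wu) (hwwh : ∀ k, wh' k ≤ wh k) :
    d x w xh wh i ≤ d x' w' xh' wh' i := by
  obtain ⟨-, -, hdx, hdxh, hdw, hdwh⟩ := hd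
  calc d x w xh wh i ≤ d x' w xh wh i := MixedMono.monoX hdx i hx hxi hw hwh
    _ ≤ d x' w xh' wh i := MixedMono.monoXh hdxh i hxh hw hwh
    _ ≤ d x' w' xh' wh i := MixedMono.monoW hdw i hw hw' hww hwh
    _ ≤ d x' w' xh' wh' i := MixedMono.monoWh hdwh i hw' hwh hwh' hwwh

end auxMono

set_option maxHeartbeats 2000000 in
/-- Lemma 2: the set `𝒮 = {(x, x̂) : x ⪯ x̂ and 0 ⪯_SE e(x, x̂)}` is forward
invariant for the deterministic embedding system, and along solutions started in `𝒮` the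
state is nondecreasing with respect to the southeast order. -/
theorem S_forward_invariant_and_SE_monotone
    {n m : ℕ} (wl wu : Fin m → ℝ) (hwlu : wl ≤ wu)
    (F : (Fin n → ℝ) → (Fin m → ℝ) → (Fin n → ℝ))
    (d : (Fin n → ℝ) → (Fin m → ℝ) → (Fin n → ℝ) → (Fin m → ℝ) → (Fin n → ℝ))
    (hd : IsDecompositionFunction wl wu F d)
    -- (a, ah) is a solution of the deterministic embedding ODE on [0, ∞)
    (a ah : ℝ → (Fin n → ℝ))
    (ha : ∀ t ∈ Set.Ici (0:ℝ), HasDerivAt a (d (a t) wl (ah t) wu) t)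
    (hah : ∀ t ∈ Set.Ici (0:ℝ), HasDerivAt ah (d (ah t) wu (a t) wl) t)
    -- (a 0, ah 0) ∈ 𝒮
    (h0tri : a 0 ≤ ah 0)
    (h0SE : (0 : Fin n → ℝ) ≤ d (a 0) wl (ah 0) wu ∧ d (ah 0) wu (a 0) wl ≤ (0 : Fin n → ℝ)) :
    (∀ t ∈ Set.Ici (0:ℝ), a t ≤ ah t ∧
        (0 : Fin n → ℝ) ≤ d (a t) wl (ah t) wu ∧ d (ah t) wu (a t) wl ≤ (0 : Fin n → ℝ)) ∧
    (∀ t₁ t₂ : ℝ, 0 ≤ t₁ → t₁ ≤ t₂ → a t₁ ≤ a t₂ ∧ ah t₂ ≤ ah t₁) := by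
  classical
  obtain ⟨hLip, hdiag, hdx, hdxh, hdw, hdwh⟩ := hd
  have hd' : IsDecompositionFunction wl wu F d := ⟨hLip, hdiag, hdx, hdxh, hdw, hdwh⟩
  have hwl : wl ∈ Set.Icc wl wu := ⟨le_refl _, hwlu⟩
  have hwu : wu ∈ Set.Icc wl wu := ⟨hwlu, le_refl _⟩
  -- abbreviations
  set A : ℝ → Fin n → ℝ := fun u => d (a u) wl (ah u) wu with hA
  set B : ℝ → Fin n → ℝ := fun u => d (ah u) wu (a u) wl with hB
  set M : ℝ → ℝ := fun u => ∑ j : Fin n,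
      (max (-(A u j)) 0 + max (B u j) 0 + max (a u j - ah u j) 0) with hM
  have hAdef : ∀ u, A u = d (a u) wl (ah u) wu := fun u => by rw [hA]
  have hBdef : ∀ u, B u = d (ah u) wu (a u) wl := fun u => by rw [hB]
  have hMdef : ∀ u, M u = ∑ j : Fin n,
      (max (-(A u j)) 0 + max (B u j) 0 + max (a u j - ah u j) 0) := fun u => by rw [hM]
  -- basic facts about M
  have hMnonneg : ∀ u, 0 ≤ M u := by
    intro u; rw [hMdef]
    refine Finset.sum_nonneg fun j _ => ?_
    have := le_max_right (-(A u j)) 0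
    have := le_max_right (B u j) 0
    have := le_max_right (a u j - ah u j) 0
    linarith
  have hterm_le : ∀ u (i : Fin n),
      max (-(A u i)) 0 + max (B u i) 0 + max (a u i - ah u i) 0 ≤ M u := by
    intro u i; rw [hMdef]
    refine Finset.single_le_sum (f := fun j =>
      max (-(A u j)) 0 + max (B u j) 0 + max (a u j - ah u j) 0) (fun j _ => ?_)
      (Finset.mem_univ i)
    have := le_max_right (-(A u j)) 0
    have := le_max_right (B u j) 0
    have := le_max_right (a u j - ah u j) 0
    linarith
  have h1le : ∀ u (i : Fin n), max (-(A u i)) 0 ≤ M u := by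
    intro u i
    have := hterm_le u i
    have := le_max_right (B u i) 0
    have := le_max_right (a u i - ah u i) 0
    linarith
  have h2le : ∀ u (i : Fin n), max (B u i) 0 ≤ M u := by
    intro u i
    have := hterm_le u i
    have := le_max_right (-(A u i)) 0
    have := le_max_right (a u i - ah u i) 0
    linarith
  have h3le : ∀ u (i : Fin n), max (a u i - ah u i) 0 ≤ M u := by
    intro u i
    have := hterm_le u i
    have := le_max_right (-(A u i)) 0
    have := le_max_right (B u i) 0
    linarith
  have hM0 : M 0 = 0 := by
    rw [hMdef]
    refine Finset.sum_eq_zero fun i _ => ?_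
    have h1 : 0 ≤ A 0 i := h0SE.1 i
    have h2 : B 0 i ≤ 0 := h0SE.2 i
    have h3 : a 0 i ≤ ah 0 i := h0tri i
    rw [max_eq_right (by linarith), max_eq_right h2, max_eq_right (by linarith)]
    ring
  have hMzero_imp : ∀ u, M u = 0 →
      (∀ i, 0 ≤ A u i) ∧ (∀ i, B u i ≤ 0) ∧ (∀ i, a u i ≤ ah u i) := by
    intro u hu
    have hz : ∀ i ∈ Finset.univ,
        max (-(A u i)) 0 + max (B u i) 0 + max (a u i - ah u i) 0 = 0 := by
      rw [hMdef] at hu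
      refine (Finset.sum_eq_zero_iff_of_nonneg fun j _ => ?_).mp hu
      have := le_max_right (-(A u j)) 0
      have := le_max_right (B u j) 0
      have := le_max_right (a u j - ah u j) 0
      linarith
    have hz' : ∀ i : Fin n, max (-(A u i)) 0 = 0 ∧ max (B u i) 0 = 0 ∧
        max (a u i - ah u i) 0 = 0 := by
      intro i
      have h := hz i (Finset.mem_univ i)
      have h1 := le_max_right (-(A u i)) 0
      have h2 := le_max_right (B u i) 0
      have h3 := le_max_right (a u i - ah u i) 0
      refine ⟨by linarith, by linarith, by linarith⟩
    refine ⟨fun i => ?_, fun i => ?_, fun i => ?_⟩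
    · have := (hz' i).1; have h1 := le_max_left (-(A u i)) 0; linarith
    · have := (hz' i).2.1; have h1 := le_max_left (B u i) 0; linarith
    · have := (hz' i).2.2; have h1 := le_max_left (a u i - ah u i) 0; linarith
  -- continuity facts
  have hDcont : Continuous (fun p : ((Fin n → ℝ) × (Fin m → ℝ)) × ((Fin n → ℝ) × (Fin m → ℝ)) =>
      d p.1.1 p.1.2 p.2.1 p.2.2) := hLip.continuous
  have hacont : ∀ t ∈ Set.Ici (0:ℝ), ContinuousAt a t := fun t ht => (ha t ht).continuousAt
  have hahcont : ∀ t ∈ Set.Ici (0:ℝ), ContinuousAt ah t := fun t ht => (hah t ht).continuousAt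
  have hC1cont : ∀ t ∈ Set.Ici (0:ℝ),
      ContinuousAt (fun u => ((a u, wl), (ah u, wu))) t := fun t ht =>
    ((hacont t ht).prodMk continuousAt_const).prodMk ((hahcont t ht).prodMk continuousAt_const)
  have hC2cont : ∀ t ∈ Set.Ici (0:ℝ),
      ContinuousAt (fun u => ((ah u, wu), (a u, wl))) t := fun t ht =>
    ((hahcont t ht).prodMk continuousAt_const).prodMk ((hacont t ht).prodMk continuousAt_const)
  have hAcont : ∀ t ∈ Set.Ici (0:ℝ), ContinuousAt A t := by
    intro t ht
    have : ContinuousAt (fun u =>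
        (fun p : ((Fin n → ℝ) × (Fin m → ℝ)) × ((Fin n → ℝ) × (Fin m → ℝ)) =>
          d p.1.1 p.1.2 p.2.1 p.2.2) ((a u, wl), (ah u, wu))) t :=
      hDcont.continuousAt.comp (hC1cont t ht)
    exact this
  have hBcont : ∀ t ∈ Set.Ici (0:ℝ), ContinuousAt B t := by
    intro t ht
    have : ContinuousAt (fun u =>
        (fun p : ((Fin n → ℝ) × (Fin m → ℝ)) × ((Fin n → ℝ) × (Fin m → ℝ)) =>
          d p.1.1 p.1.2 p.2.1 p.2.2) ((ah u, wu), (a u, wl))) t :=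
      hDcont.continuousAt.comp (hC2cont t ht)
    exact this
  have hMcont : ∀ t ∈ Set.Ici (0:ℝ), ContinuousAt M t := by
    intro t ht
    rw [hM]
    refine tendsto_finset_sum _ fun j _ => ?_
    have hAj : ContinuousAt (fun u => A u j) t :=
      (continuous_apply j).continuousAt.comp (hAcont t ht)
    have hBj : ContinuousAt (fun u => B u j) t :=
      (continuous_apply j).continuousAt.comp (hBcont t ht)
    have haj : ContinuousAt (fun u => a u j) t :=
      (continuous_apply j).continuousAt.comp (hacont t ht)
    have hahj : ContinuousAt (fun u => ah u j) t :=
      (continuous_apply j).continuousAt.comp (hahcont t ht)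
    exact ((hAj.neg.max continuousAt_const).add (hBj.max continuousAt_const)).add
      ((haj.sub hahj).max continuousAt_const)
  -- componentwise derivatives
  have hai : ∀ (i : Fin n), ∀ t ∈ Set.Ici (0:ℝ), HasDerivAt (fun u => a u i) (A t i) t :=
    fun i t ht => hasDerivAt_pi.mp (ha t ht) i
  have hahi : ∀ (i : Fin n), ∀ t ∈ Set.Ici (0:ℝ), HasDerivAt (fun u => ah u i) (B t i) t :=
    fun i t ht => hasDerivAt_pi.mp (hah t ht) i
  -- elementary absolute-value identities
  have auxabs1 : ∀ x : ℝ, |x - max x 0| = max (-x) 0 := by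
    intro x
    rcases le_total x 0 with h | h
    · rw [max_eq_right h, max_eq_left (neg_nonneg.mpr h), sub_zero, abs_of_nonpos h]
    · rw [max_eq_left h, max_eq_right (neg_nonpos.mpr h), sub_self, abs_zero]
  have auxabs2 : ∀ x : ℝ, |x - min x 0| = max x 0 := by
    intro x
    rcases le_total x 0 with h | h
    · rw [min_eq_left h, max_eq_right h, sub_self, abs_zero]
    · rw [min_eq_right h, max_eq_left h, sub_zero, abs_of_nonneg h]
  have auxabs3 : ∀ x y : ℝ, |x - min x y| = max (x - y) 0 := by
    intro x y
    rcases le_total x y with h | h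
    · rw [min_eq_left h, max_eq_right (by linarith), sub_self, abs_zero]
    · rw [min_eq_right h, max_eq_left (by linarith), abs_of_nonneg (by linarith)]
  -- THE LOCAL INVARIANCE STEP
  have LOCAL : ∀ t0 : ℝ, 0 ≤ t0 → M t0 = 0 →
      ∃ δ > 0, ∀ u ∈ Set.Icc t0 (t0 + δ), M u = 0 := by
    intro t0 ht0 hMt0
    obtain ⟨hA0, hB0, hor⟩ := hMzero_imp t0 hMt0
    obtain ⟨K1, U1, hU1, hK1⟩ := hLip ((a t0, wl), (ah t0, wu))
    obtain ⟨K2, U2, hU2, hK2⟩ := hLip ((ah t0, wu), (a t0, wl))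
    set K : ℝ := max (K1 : ℝ) (K2 : ℝ) with hKdef
    have hK0 : 0 ≤ K := le_trans K1.coe_nonneg (le_max_left _ _)
    -- componentwise Lipschitz estimates
    have hcomp1 : ∀ (x : Fin n → ℝ) (w : Fin m → ℝ) (xh : Fin n → ℝ) (wh : Fin m → ℝ)
        (x' : Fin n → ℝ) (w' : Fin m → ℝ) (xh' : Fin n → ℝ) (wh' : Fin m → ℝ),
        (((x, w), (xh, wh)) : ((Fin n → ℝ) × (Fin m → ℝ)) × ((Fin n → ℝ) × (Fin m → ℝ))) ∈ U1 →
        (((x', w'), (xh', wh')) : ((Fin n → ℝ) × (Fin m → ℝ)) × ((Fin n → ℝ) × (Fin m → ℝ))) ∈ U1 →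
        ∀ i : Fin n, d x w xh wh i ≤ d x' w' xh' wh' i +
          K * dist (((x, w), (xh, wh)) :
              ((Fin n → ℝ) × (Fin m → ℝ)) × ((Fin n → ℝ) × (Fin m → ℝ))) ((x', w'), (xh', wh')) := by
      intro x w xh wh x' w' xh' wh' hp hq i
      have h1 := hK1.dist_le_mul _ hp _ hq
      simp only at h1
      have h2 := dist_le_pi_dist (d x w xh wh) (d x' w' xh' wh') i
      rw [Real.dist_eq] at h2
      have h3 : (K1 : ℝ) * dist (((x, w), (xh, wh)) :
            ((Fin n → ℝ) × (Fin m → ℝ)) × ((Fin n → ℝ) × (Fin m → ℝ))) ((x', w'), (xh', wh'))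
          ≤ K * dist (((x, w), (xh, wh)) :
            ((Fin n → ℝ) × (Fin m → ℝ)) × ((Fin n → ℝ) × (Fin m → ℝ))) ((x', w'), (xh', wh')) :=
        mul_le_mul_of_nonneg_right (le_max_left _ _) dist_nonneg
      have h4 := le_of_abs_le (h2.trans (h1.trans h3))
      linarith
    have hcomp2 : ∀ (x : Fin n → ℝ) (w : Fin m → ℝ) (xh : Fin n → ℝ) (wh : Fin m → ℝ)
        (x' : Fin n → ℝ) (w' : Fin m → ℝ) (xh' : Fin n → ℝ) (wh' : Fin m → ℝ),
        (((x, w), (xh, wh)) : ((Fin n → ℝ) × (Fin m → ℝ)) × ((Fin n → ℝ) × (Fin m → ℝ))) ∈ U2 →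
        (((x', w'), (xh', wh')) : ((Fin n → ℝ) × (Fin m → ℝ)) × ((Fin n → ℝ) × (Fin m → ℝ))) ∈ U2 →
        ∀ i : Fin n, d x w xh wh i ≤ d x' w' xh' wh' i +
          K * dist (((x, w), (xh, wh)) :
              ((Fin n → ℝ) × (Fin m → ℝ)) × ((Fin n → ℝ) × (Fin m → ℝ))) ((x', w'), (xh', wh')) := by
      intro x w xh wh x' w' xh' wh' hp hq i
      have h1 := hK2.dist_le_mul _ hp _ hq
      simp only at h1
      have h2 := dist_le_pi_dist (d x w xh wh) (d x' w' xh' wh') i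
      rw [Real.dist_eq] at h2
      have h3 : (K2 : ℝ) * dist (((x, w), (xh, wh)) :
            ((Fin n → ℝ) × (Fin m → ℝ)) × ((Fin n → ℝ) × (Fin m → ℝ))) ((x', w'), (xh', wh'))
          ≤ K * dist (((x, w), (xh, wh)) :
            ((Fin n → ℝ) × (Fin m → ℝ)) × ((Fin n → ℝ) × (Fin m → ℝ))) ((x', w'), (xh', wh')) :=
        mul_le_mul_of_nonneg_right (le_max_right _ _) dist_nonneg
      have h4 := le_of_abs_le (h2.trans (h1.trans h3))
      linarith
    -- open neighborhoods
    obtain ⟨V1, hV1U, hV1o, hV1m⟩ := mem_nhds_iff.mp hU1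
    obtain ⟨V2, hV2U, hV2o, hV2m⟩ := mem_nhds_iff.mp hU2
    have hinf0 : (fun j => min (a t0 j) (ah t0 j)) = a t0 :=
      funext fun j => min_eq_left (hor j)
    -- the four curves are eventually in the neighborhoods
    have hC1'cont : ContinuousAt (fun u => ((fun j => min (a u j) (ah u j), wl),
        (ah u, wu))) t0 := by
      refine ContinuousAt.prodMk (ContinuousAt.prodMk ?_ continuousAt_const)
        ((hahcont t0 ht0).prodMk continuousAt_const)
      refine continuousAt_pi.mpr fun j => ?_
      exact ((continuous_apply j).continuousAt.comp (hacont t0 ht0)).min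
        ((continuous_apply j).continuousAt.comp (hahcont t0 ht0))
    have hC2'cont : ContinuousAt (fun u => ((ah u, wu),
        ((fun j => min (a u j) (ah u j)), wl))) t0 := by
      refine ContinuousAt.prodMk ((hahcont t0 ht0).prodMk continuousAt_const)
        (ContinuousAt.prodMk ?_ continuousAt_const)
      refine continuousAt_pi.mpr fun j => ?_
      exact ((continuous_apply j).continuousAt.comp (hacont t0 ht0)).min
        ((continuous_apply j).continuousAt.comp (hahcont t0 ht0))
    have hm1' : ((fun j => min (a t0 j) (ah t0 j), wl), (ah t0, wu)) ∈ V1 := by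
      rw [hinf0]; exact hV1m
    have hm2' : ((ah t0, wu), ((fun j => min (a t0 j) (ah t0 j)), wl)) ∈ V2 := by
      rw [hinf0]; exact hV2m
    have hE : ∀ᶠ u in 𝓝 t0, ((a u, wl), (ah u, wu)) ∈ V1 ∧
        ((fun j => min (a u j) (ah u j), wl), (ah u, wu)) ∈ V1 ∧
        ((ah u, wu), (a u, wl)) ∈ V2 ∧
        ((ah u, wu), ((fun j => min (a u j) (ah u j)), wl)) ∈ V2 := by
      filter_upwards [(hC1cont t0 ht0).eventually_mem (hV1o.mem_nhds hV1m),
        hC1'cont.eventually_mem (hV1o.mem_nhds hm1'),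
        (hC2cont t0 ht0).eventually_mem (hV2o.mem_nhds hV2m),
        hC2'cont.eventually_mem (hV2o.mem_nhds hm2')] with u u1 u2 u3 u4
      exact ⟨u1, u2, u3, u4⟩
    obtain ⟨ε, hε, hball⟩ := Metric.eventually_nhds_iff.mp hE
    refine ⟨ε/2, by linarith, ?_⟩
    have hmemV : ∀ u ∈ Set.Icc t0 (t0 + ε/2), ((a u, wl), (ah u, wu)) ∈ V1 ∧
        ((fun j => min (a u j) (ah u j), wl), (ah u, wu)) ∈ V1 ∧
        ((ah u, wu), (a u, wl)) ∈ V2 ∧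
        ((ah u, wu), ((fun j => min (a u j) (ah u j)), wl)) ∈ V2 := by
      intro u hu
      apply hball
      rw [Real.dist_eq, abs_of_nonneg (by linarith [hu.1])]
      linarith [hu.2]
    -- the key differential inequality
    have KEY : ∀ t ∈ Set.Ico t0 (t0 + ε/2), ∀ r, (4*(n:ℝ)*K + 1) * M t < r →
        ∀ᶠ z in 𝓝[>] t, (z - t)⁻¹ * (M z - M t) < r := by
      intro t ht r hr
      have ht0' : (0:ℝ) ≤ t := le_trans ht0 ht.1
      have htmem := hmemV t ⟨ht.1, ht.2.le⟩
      obtain ⟨HV1, HV1', HV2, HV2'⟩ := htmem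
      set ρ : ℝ := (r - (4*(n:ℝ)*K + 1) * M t) / (3*(n:ℝ)+1) with hρdef
      have hρ : 0 < ρ := div_pos (by linarith) (by positivity)
      have hρeq : ρ * (3*(n:ℝ)+1) = r - (4*(n:ℝ)*K + 1) * M t := by
        rw [hρdef]; field_simp
      set ρ₁ : ℝ := ρ / (K+1) with hρ₁def
      have hK1pos : (0:ℝ) < K + 1 := by linarith
      have hρ₁ : 0 < ρ₁ := div_pos hρ hK1pos
      have hKρ₁ : K * ρ₁ ≤ ρ := by
        rw [hρ₁def, mul_div_assoc']
        rw [div_le_iff₀ hK1pos]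
        nlinarith
      have hKbig : K * (ρ₁ + M t) ≤ K * M t + ρ := by
        have : K * (ρ₁ + M t) = K * ρ₁ + K * M t := by ring
        linarith
      -- pi-norm bounds for the perturbation directions
      have hnormP : ‖A t - (fun j => max (A t j) 0)‖ ≤ M t := by
        refine (pi_norm_le_iff_of_nonneg (hMnonneg t)).mpr fun j => ?_
        rw [Pi.sub_apply, Real.norm_eq_abs, auxabs1]
        exact h1le t j
      have hnormN : ‖B t - (fun j => min (B t j) 0)‖ ≤ M t := by
        refine (pi_norm_le_iff_of_nonneg (hMnonneg t)).mpr fun j => ?_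
        rw [Pi.sub_apply, Real.norm_eq_abs, auxabs2]
        exact h2le t j
      -- E1 : the terms max(-(A z i)) 0
      have E1 : ∀ i : Fin n, ∀ᶠ z in 𝓝[>] t,
          max (-(A z i)) 0 - max (-(A t i)) 0 ≤ (K * M t + ρ) * (z - t) := by
        intro i
        rcases le_or_gt (A t i) 0 with hAti | hAti
        · -- hard case
          set P : Fin n → ℝ := fun j => max (A t j) 0 with hPdef
          set N : Fin n → ℝ := fun j => min (B t j) 0 with hNdef
          have hPi : P i = 0 := max_eq_right hAti
          have ho1 : ∀ᶠ z in 𝓝 t, ‖a z - a t - (z - t) • A t‖ ≤ ρ₁ * ‖z - t‖ :=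
            (hasDerivAt_iff_isLittleO.mp (ha t ht0')).def hρ₁
          have ho2 : ∀ᶠ z in 𝓝 t, ‖ah z - ah t - (z - t) • B t‖ ≤ ρ₁ * ‖z - t‖ :=
            (hasDerivAt_iff_isLittleO.mp (hah t ht0')).def hρ₁
          have hev1 : ∀ᶠ z in 𝓝 t, ((a z, wl), (ah z, wu)) ∈ V1 :=
            (hC1cont t ht0').eventually_mem (hV1o.mem_nhds HV1)
          have hYcont : ContinuousAt (fun z => ((a t + (z - t) • P, wl),
              (ah t + (z - t) • N, wu))) t := by
            refine ContinuousAt.prodMk (ContinuousAt.prodMk ?_ continuousAt_const)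
              (ContinuousAt.prodMk ?_ continuousAt_const)
            · exact (continuousAt_const.add
                ((continuousAt_id.sub continuousAt_const).smul continuousAt_const))
            · exact (continuousAt_const.add
                ((continuousAt_id.sub continuousAt_const).smul continuousAt_const))
          have hYt : ((a t + ((t:ℝ) - t) • P, wl), (ah t + ((t:ℝ) - t) • N, wu)) ∈ V1 := by
            simp only [sub_self, zero_smul, add_zero]
            exact HV1
          have hev2 : ∀ᶠ z in 𝓝 t, ((a t + (z - t) • P, wl), (ah t + (z - t) • N, wu)) ∈ V1 :=
            hYcont.eventually_mem (hV1o.mem_nhds hYt)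
          filter_upwards [ho1.filter_mono nhdsWithin_le_nhds, ho2.filter_mono nhdsWithin_le_nhds,
            hev1.filter_mono nhdsWithin_le_nhds, hev2.filter_mono nhdsWithin_le_nhds,
            self_mem_nhdsWithin] with z h1 h2 h3 h4 hz
          have hh : 0 < z - t := sub_pos.mpr hz
          -- monotone comparison
          have hmono : A t i ≤ d (a t + (z - t) • P) wl (ah t + (z - t) • N) wu i := by
            rw [hAdef]
            refine MixedMono.monoAll hd' i (fun j => ?_) ?_ (fun j => ?_)
              hwl hwl (fun k => le_refl _) hwu hwu (fun k => le_refl _)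
            · simp only [Pi.add_apply, Pi.smul_apply, smul_eq_mul]
              have : 0 ≤ P j := le_max_right _ _
              nlinarith
            · simp only [Pi.add_apply, Pi.smul_apply, smul_eq_mul, hPi]
              ring
            · simp only [Pi.add_apply, Pi.smul_apply, smul_eq_mul]
              have : N j ≤ 0 := min_le_right _ _
              nlinarith
          -- Lipschitz comparison
          have hdista : dist (a t + (z - t) • P) (a z) ≤ (ρ₁ + M t) * (z - t) := by
            rw [dist_eq_norm]
            have hrw : a t + (z - t) • P - a z
                = -((a z - a t - (z - t) • A t) + (z - t) • (A t - P)) := by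
              ext j
              simp only [Pi.add_apply, Pi.sub_apply, Pi.neg_apply, Pi.smul_apply,
                smul_eq_mul]
              ring
            rw [hrw, norm_neg]
            have h5 := norm_add_le (a z - a t - (z - t) • A t) ((z - t) • (A t - P))
            have h6 : ‖(z - t) • (A t - P)‖ = (z - t) * ‖A t - P‖ := by
              rw [norm_smul, Real.norm_eq_abs, abs_of_nonneg hh.le]
            have h7 : ‖(z - t) • (A t - P)‖ ≤ (z - t) * M t := by
              rw [h6]; exact mul_le_mul_of_nonneg_left hnormP hh.le
            have h8 : ρ₁ * ‖z - t‖ = ρ₁ * (z - t) := by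
              rw [Real.norm_eq_abs, abs_of_nonneg hh.le]
            rw [h8] at h1
            calc ‖(a z - a t - (z - t) • A t) + (z - t) • (A t - P)‖
                ≤ ‖a z - a t - (z - t) • A t‖ + ‖(z - t) • (A t - P)‖ := h5
              _ ≤ ρ₁ * (z - t) + (z - t) * M t := add_le_add h1 h7
              _ = (ρ₁ + M t) * (z - t) := by ring
          have hdistah : dist (ah t + (z - t) • N) (ah z) ≤ (ρ₁ + M t) * (z - t) := by
            rw [dist_eq_norm]
            have hrw : ah t + (z - t) • N - ah z
                = -((ah z - ah t - (z - t) • B t) + (z - t) • (B t - N)) := by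
              ext j
              simp only [Pi.add_apply, Pi.sub_apply, Pi.neg_apply, Pi.smul_apply,
                smul_eq_mul]
              ring
            rw [hrw, norm_neg]
            have h5 := norm_add_le (ah z - ah t - (z - t) • B t) ((z - t) • (B t - N))
            have h6 : ‖(z - t) • (B t - N)‖ = (z - t) * ‖B t - N‖ := by
              rw [norm_smul, Real.norm_eq_abs, abs_of_nonneg hh.le]
            have h7 : ‖(z - t) • (B t - N)‖ ≤ (z - t) * M t := by
              rw [h6]; exact mul_le_mul_of_nonneg_left hnormN hh.le
            have h8 : ρ₁ * ‖z - t‖ = ρ₁ * (z - t) := by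
              rw [Real.norm_eq_abs, abs_of_nonneg hh.le]
            rw [h8] at h2
            calc ‖(ah z - ah t - (z - t) • B t) + (z - t) • (B t - N)‖
                ≤ ‖ah z - ah t - (z - t) • B t‖ + ‖(z - t) • (B t - N)‖ := h5
              _ ≤ ρ₁ * (z - t) + (z - t) * M t := add_le_add h2 h7
              _ = (ρ₁ + M t) * (z - t) := by ring
          have hdistbig : dist ((((a t + (z - t) • P, wl), (ah t + (z - t) • N, wu))) :
              ((Fin n → ℝ) × (Fin m → ℝ)) × ((Fin n → ℝ) × (Fin m → ℝ)))
              ((a z, wl), (ah z, wu)) ≤ (ρ₁ + M t) * (z - t) := by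
            have hc : 0 ≤ (ρ₁ + M t) * (z - t) :=
              mul_nonneg (by linarith [hMnonneg t]) hh.le
            rw [Prod.dist_eq]
            apply max_le <;> rw [Prod.dist_eq] <;> apply max_le
            · exact hdista
            · simpa using hc
            · exact hdistah
            · simpa using hc
          have hlip : d (a t + (z - t) • P) wl (ah t + (z - t) • N) wu i
              ≤ A z i + K * ((ρ₁ + M t) * (z - t)) := by
            have h9 := hcomp1 (a t + (z - t) • P) wl (ah t + (z - t) • N) wu
              (a z) wl (ah z) wu (hV1U h4) (hV1U h3) i
            have h10 : K * dist ((((a t + (z - t) • P, wl), (ah t + (z - t) • N, wu))) :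
                ((Fin n → ℝ) × (Fin m → ℝ)) × ((Fin n → ℝ) × (Fin m → ℝ)))
                ((a z, wl), (ah z, wu)) ≤ K * ((ρ₁ + M t) * (z - t)) :=
              mul_le_mul_of_nonneg_left hdistbig hK0
            rw [hAdef]
            linarith
          have hAz : A t i ≤ A z i + (K * M t + ρ) * (z - t) := by
            have h11 : K * ((ρ₁ + M t) * (z - t)) ≤ (K * M t + ρ) * (z - t) := by
              have := mul_le_mul_of_nonneg_right hKbig hh.le
              calc K * ((ρ₁ + M t) * (z - t)) = (K * (ρ₁ + M t)) * (z - t) := by ring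
                _ ≤ (K * M t + ρ) * (z - t) := this
            linarith
          have hmaxt : max (-(A t i)) 0 = -(A t i) := max_eq_left (by linarith)
          have hcpos : 0 ≤ (K * M t + ρ) * (z - t) :=
            mul_nonneg (by nlinarith [hMnonneg t]) hh.le
          rw [hmaxt]
          have : max (-(A z i)) 0 ≤ -(A t i) + (K * M t + ρ) * (z - t) := by
            apply max_le
            · linarith
            · linarith
          linarith
        · -- easy case : A t i > 0
          have hc : ContinuousAt (fun z => A z i) t :=
            (continuous_apply i).continuousAt.comp (hAcont t ht0')
          have hev : ∀ᶠ z in 𝓝 t, A z i ∈ Set.Ioi (0:ℝ) :=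
            hc.eventually_mem (isOpen_Ioi.mem_nhds hAti)
          filter_upwards [hev.filter_mono nhdsWithin_le_nhds, self_mem_nhdsWithin] with z h1 hz
          have hh : 0 < z - t := sub_pos.mpr hz
          have h2 : max (-(A z i)) 0 = 0 := max_eq_right (by simp at h1; linarith)
          have h3 : 0 ≤ max (-(A t i)) 0 := le_max_right _ _
          have hcpos : 0 ≤ (K * M t + ρ) * (z - t) :=
            mul_nonneg (by nlinarith [hMnonneg t]) hh.le
          rw [h2]
          linarith
      -- E2 : the terms max (B z i) 0
      have E2 : ∀ i : Fin n, ∀ᶠ z in 𝓝[>] t,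
          max (B z i) 0 - max (B t i) 0 ≤ (K * M t + ρ) * (z - t) := by
        intro i
        rcases le_or_gt 0 (B t i) with hBti | hBti
        · -- hard case
          set P : Fin n → ℝ := fun j => max (A t j) 0 with hPdef
          set N : Fin n → ℝ := fun j => min (B t j) 0 with hNdef
          have hNi : N i = 0 := min_eq_right hBti
          have ho1 : ∀ᶠ z in 𝓝 t, ‖a z - a t - (z - t) • A t‖ ≤ ρ₁ * ‖z - t‖ :=
            (hasDerivAt_iff_isLittleO.mp (ha t ht0')).def hρ₁
          have ho2 : ∀ᶠ z in 𝓝 t, ‖ah z - ah t - (z - t) • B t‖ ≤ ρ₁ * ‖z - t‖ :=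
            (hasDerivAt_iff_isLittleO.mp (hah t ht0')).def hρ₁
          have hev1 : ∀ᶠ z in 𝓝 t, ((ah z, wu), (a z, wl)) ∈ V2 :=
            (hC2cont t ht0').eventually_mem (hV2o.mem_nhds HV2)
          have hYcont : ContinuousAt (fun z => ((ah t + (z - t) • N, wu),
              (a t + (z - t) • P, wl))) t := by
            refine ContinuousAt.prodMk (ContinuousAt.prodMk ?_ continuousAt_const)
              (ContinuousAt.prodMk ?_ continuousAt_const)
            · exact (continuousAt_const.add
                ((continuousAt_id.sub continuousAt_const).smul continuousAt_const))
            · exact (continuousAt_const.add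
                ((continuousAt_id.sub continuousAt_const).smul continuousAt_const))
          have hYt : ((ah t + ((t:ℝ) - t) • N, wu), (a t + ((t:ℝ) - t) • P, wl)) ∈ V2 := by
            simp only [sub_self, zero_smul, add_zero]
            exact HV2
          have hev2 : ∀ᶠ z in 𝓝 t, ((ah t + (z - t) • N, wu), (a t + (z - t) • P, wl)) ∈ V2 :=
            hYcont.eventually_mem (hV2o.mem_nhds hYt)
          filter_upwards [ho1.filter_mono nhdsWithin_le_nhds, ho2.filter_mono nhdsWithin_le_nhds,
            hev1.filter_mono nhdsWithin_le_nhds, hev2.filter_mono nhdsWithin_le_nhds,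
            self_mem_nhdsWithin] with z h1 h2 h3 h4 hz
          have hh : 0 < z - t := sub_pos.mpr hz
          have hmono : d (ah t + (z - t) • N) wu (a t + (z - t) • P) wl i ≤ B t i := by
            rw [hBdef]
            refine MixedMono.monoAll hd' i (fun j => ?_) ?_ (fun j => ?_)
              hwu hwu (fun k => le_refl _) hwl hwl (fun k => le_refl _)
            · simp only [Pi.add_apply, Pi.smul_apply, smul_eq_mul]
              have : N j ≤ 0 := min_le_right _ _
              nlinarith
            · simp only [Pi.add_apply, Pi.smul_apply, smul_eq_mul, hNi]
              ring
            · simp only [Pi.add_apply, Pi.smul_apply, smul_eq_mul]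
              have : 0 ≤ P j := le_max_right _ _
              nlinarith
          have hdista : dist (a t + (z - t) • P) (a z) ≤ (ρ₁ + M t) * (z - t) := by
            rw [dist_eq_norm]
            have hrw : a t + (z - t) • P - a z
                = -((a z - a t - (z - t) • A t) + (z - t) • (A t - P)) := by
              ext j
              simp only [Pi.add_apply, Pi.sub_apply, Pi.neg_apply, Pi.smul_apply,
                smul_eq_mul]
              ring
            rw [hrw, norm_neg]
            have h5 := norm_add_le (a z - a t - (z - t) • A t) ((z - t) • (A t - P))
            have h6 : ‖(z - t) • (A t - P)‖ = (z - t) * ‖A t - P‖ := by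
              rw [norm_smul, Real.norm_eq_abs, abs_of_nonneg hh.le]
            have h7 : ‖(z - t) • (A t - P)‖ ≤ (z - t) * M t := by
              rw [h6]; exact mul_le_mul_of_nonneg_left hnormP hh.le
            have h8 : ρ₁ * ‖z - t‖ = ρ₁ * (z - t) := by
              rw [Real.norm_eq_abs, abs_of_nonneg hh.le]
            rw [h8] at h1
            calc ‖(a z - a t - (z - t) • A t) + (z - t) • (A t - P)‖
                ≤ ‖a z - a t - (z - t) • A t‖ + ‖(z - t) • (A t - P)‖ := h5
              _ ≤ ρ₁ * (z - t) + (z - t) * M t := add_le_add h1 h7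
              _ = (ρ₁ + M t) * (z - t) := by ring
          have hdistah : dist (ah t + (z - t) • N) (ah z) ≤ (ρ₁ + M t) * (z - t) := by
            rw [dist_eq_norm]
            have hrw : ah t + (z - t) • N - ah z
                = -((ah z - ah t - (z - t) • B t) + (z - t) • (B t - N)) := by
              ext j
              simp only [Pi.add_apply, Pi.sub_apply, Pi.neg_apply, Pi.smul_apply,
                smul_eq_mul]
              ring
            rw [hrw, norm_neg]
            have h5 := norm_add_le (ah z - ah t - (z - t) • B t) ((z - t) • (B t - N))
            have h6 : ‖(z - t) • (B t - N)‖ = (z - t) * ‖B t - N‖ := by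
              rw [norm_smul, Real.norm_eq_abs, abs_of_nonneg hh.le]
            have h7 : ‖(z - t) • (B t - N)‖ ≤ (z - t) * M t := by
              rw [h6]; exact mul_le_mul_of_nonneg_left hnormN hh.le
            have h8 : ρ₁ * ‖z - t‖ = ρ₁ * (z - t) := by
              rw [Real.norm_eq_abs, abs_of_nonneg hh.le]
            rw [h8] at h2
            calc ‖(ah z - ah t - (z - t) • B t) + (z - t) • (B t - N)‖
                ≤ ‖ah z - ah t - (z - t) • B t‖ + ‖(z - t) • (B t - N)‖ := h5
              _ ≤ ρ₁ * (z - t) + (z - t) * M t := add_le_add h2 h7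
              _ = (ρ₁ + M t) * (z - t) := by ring
          have hdistbig : dist ((((ah z, wu), (a z, wl))) :
              ((Fin n → ℝ) × (Fin m → ℝ)) × ((Fin n → ℝ) × (Fin m → ℝ)))
              ((ah t + (z - t) • N, wu), (a t + (z - t) • P, wl))
              ≤ (ρ₁ + M t) * (z - t) := by
            have hc : 0 ≤ (ρ₁ + M t) * (z - t) :=
              mul_nonneg (by linarith [hMnonneg t]) hh.le
            rw [Prod.dist_eq]
            apply max_le <;> rw [Prod.dist_eq] <;> apply max_le
            · rw [dist_comm] at hdistah; exact hdistah
            · simpa using hc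
            · rw [dist_comm] at hdista; exact hdista
            · simpa using hc
          have hlip : B z i ≤ d (ah t + (z - t) • N) wu (a t + (z - t) • P) wl i
              + K * ((ρ₁ + M t) * (z - t)) := by
            have h9 := hcomp2 (ah z) wu (a z) wl
              (ah t + (z - t) • N) wu (a t + (z - t) • P) wl (hV2U h3) (hV2U h4) i
            have h10 : K * dist ((((ah z, wu), (a z, wl))) :
                ((Fin n → ℝ) × (Fin m → ℝ)) × ((Fin n → ℝ) × (Fin m → ℝ)))
                ((ah t + (z - t) • N, wu), (a t + (z - t) • P, wl))
                ≤ K * ((ρ₁ + M t) * (z - t)) :=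
              mul_le_mul_of_nonneg_left hdistbig hK0
            rw [hBdef]
            linarith
          have hBz : B z i ≤ B t i + (K * M t + ρ) * (z - t) := by
            have h11 : K * ((ρ₁ + M t) * (z - t)) ≤ (K * M t + ρ) * (z - t) := by
              have := mul_le_mul_of_nonneg_right hKbig hh.le
              calc K * ((ρ₁ + M t) * (z - t)) = (K * (ρ₁ + M t)) * (z - t) := by ring
                _ ≤ (K * M t + ρ) * (z - t) := this
            linarith
          have hmaxt : max (B t i) 0 = B t i := max_eq_left hBti
          have hcpos : 0 ≤ (K * M t + ρ) * (z - t) :=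
            mul_nonneg (by nlinarith [hMnonneg t]) hh.le
          rw [hmaxt]
          have : max (B z i) 0 ≤ B t i + (K * M t + ρ) * (z - t) := by
            apply max_le
            · linarith
            · linarith
          linarith
        · -- easy case : B t i < 0
          have hc : ContinuousAt (fun z => B z i) t :=
            (continuous_apply i).continuousAt.comp (hBcont t ht0')
          have hev : ∀ᶠ z in 𝓝 t, B z i ∈ Set.Iio (0:ℝ) :=
            hc.eventually_mem (isOpen_Iio.mem_nhds hBti)
          filter_upwards [hev.filter_mono nhdsWithin_le_nhds, self_mem_nhdsWithin] with z h1 hz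
          have hh : 0 < z - t := sub_pos.mpr hz
          have h2 : max (B z i) 0 = 0 := max_eq_right (by simp at h1; linarith)
          have h3 : 0 ≤ max (B t i) 0 := le_max_right _ _
          have hcpos : 0 ≤ (K * M t + ρ) * (z - t) :=
            mul_nonneg (by nlinarith [hMnonneg t]) hh.le
          rw [h2]
          linarith
      -- E3 : the ordering terms
      have E3 : ∀ i : Fin n, ∀ᶠ z in 𝓝[>] t,
          max (a z i - ah z i) 0 - max (a t i - ah t i) 0 ≤ (2*K * M t + ρ) * (z - t) := by
        intro i
        have hgderiv : HasDerivAt (fun z => a z i - ah z i) (A t i - B t i) t :=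
          (hai i t ht0').sub (hahi i t ht0')
        rcases lt_or_ge (a t i - ah t i) 0 with hgt | hgt
        · -- easy case
          have hev : ∀ᶠ z in 𝓝 t, a z i - ah z i ∈ Set.Iio (0:ℝ) :=
            hgderiv.continuousAt.eventually_mem (isOpen_Iio.mem_nhds hgt)
          filter_upwards [hev.filter_mono nhdsWithin_le_nhds, self_mem_nhdsWithin] with z h1 hz
          have hh : 0 < z - t := sub_pos.mpr hz
          have h2 : max (a z i - ah z i) 0 = 0 := max_eq_right (by simp at h1; linarith)
          have h3 : 0 ≤ max (a t i - ah t i) 0 := le_max_right _ _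
          have hcpos : 0 ≤ (2*K * M t + ρ) * (z - t) :=
            mul_nonneg (by nlinarith [hMnonneg t]) hh.le
          rw [h2]
          linarith
        · -- hard case : crossing estimate
          have hgt' : ah t i ≤ a t i := by linarith
          set p : Fin n → ℝ := fun j => min (a t j) (ah t j) with hpdef
          have hpi : p i = ah t i := min_eq_right hgt'
          have hdistp : dist (a t) p ≤ M t := by
            refine (dist_pi_le_iff (hMnonneg t)).mpr fun j => ?_
            rw [Real.dist_eq, auxabs3]
            exact h3le t j
          have hdist1 : dist ((((a t, wl), (ah t, wu))) :
              ((Fin n → ℝ) × (Fin m → ℝ)) × ((Fin n → ℝ) × (Fin m → ℝ)))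
              ((p, wl), (ah t, wu)) ≤ M t := by
            rw [Prod.dist_eq]
            apply max_le <;> rw [Prod.dist_eq] <;> apply max_le
            · exact hdistp
            · simpa using hMnonneg t
            · simpa using hMnonneg t
            · simpa using hMnonneg t
          have hdist2 : dist ((((ah t, wu), (p, wl))) :
              ((Fin n → ℝ) × (Fin m → ℝ)) × ((Fin n → ℝ) × (Fin m → ℝ)))
              ((ah t, wu), (a t, wl)) ≤ M t := by
            rw [Prod.dist_eq]
            apply max_le <;> rw [Prod.dist_eq] <;> apply max_le
            · simpa using hMnonneg t
            · simpa using hMnonneg t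
            · rw [dist_comm]; exact hdistp
            · simpa using hMnonneg t
          have hstep1 : A t i ≤ d p wl (ah t) wu i + K * M t := by
            have h9 := hcomp1 (a t) wl (ah t) wu p wl (ah t) wu (hV1U HV1) (hV1U HV1') i
            have h10 : K * dist ((((a t, wl), (ah t, wu))) :
                ((Fin n → ℝ) × (Fin m → ℝ)) × ((Fin n → ℝ) × (Fin m → ℝ)))
                ((p, wl), (ah t, wu)) ≤ K * M t :=
              mul_le_mul_of_nonneg_left hdist1 hK0
            rw [hAdef]
            linarith
          have hstep2 : d p wl (ah t) wu i ≤ d (ah t) wu p wl i := by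
            refine MixedMono.monoAll hd' i (fun j => min_le_right _ _) hpi
              (fun j => min_le_right _ _) hwl hwu hwlu hwu hwl hwlu
          have hstep3 : d (ah t) wu p wl i ≤ B t i + K * M t := by
            have h9 := hcomp2 (ah t) wu p wl (ah t) wu (a t) wl (hV2U HV2') (hV2U HV2) i
            have h10 : K * dist ((((ah t, wu), (p, wl))) :
                ((Fin n → ℝ) × (Fin m → ℝ)) × ((Fin n → ℝ) × (Fin m → ℝ)))
                ((ah t, wu), (a t, wl)) ≤ K * M t :=
              mul_le_mul_of_nonneg_left hdist2 hK0
            rw [hBdef]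
            linarith
          have hcross : A t i - B t i ≤ 2*K * M t := by linarith
          have ho : ∀ᶠ z in 𝓝 t, ‖(a z i - ah z i) - (a t i - ah t i)
              - (z - t) • (A t i - B t i)‖ ≤ ρ * ‖z - t‖ :=
            (hasDerivAt_iff_isLittleO.mp hgderiv).def hρ
          filter_upwards [ho.filter_mono nhdsWithin_le_nhds, self_mem_nhdsWithin] with z h1 hz
          have hh : 0 < z - t := sub_pos.mpr hz
          rw [Real.norm_eq_abs, Real.norm_eq_abs, smul_eq_mul, abs_of_nonneg hh.le] at h1
          have h2 : a z i - ah z i ≤ (a t i - ah t i) + (A t i - B t i + ρ) * (z - t) := by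
            have := le_of_abs_le h1
            nlinarith
          have hmaxt : max (a t i - ah t i) 0 = a t i - ah t i := max_eq_left hgt
          have hcpos : 0 ≤ (2*K * M t + ρ) * (z - t) :=
            mul_nonneg (by nlinarith [hMnonneg t]) hh.le
          rw [hmaxt]
          have h3 : (A t i - B t i + ρ) * (z - t) ≤ (2*K * M t + ρ) * (z - t) :=
            mul_le_mul_of_nonneg_right (by linarith) hh.le
          have : max (a z i - ah z i) 0 ≤ (a t i - ah t i) + (2*K * M t + ρ) * (z - t) := by
            apply max_le
            · linarith
            · linarith
          linarith
      -- combine the three families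
      have hall1 := eventually_all.mpr E1
      have hall2 := eventually_all.mpr E2
      have hall3 := eventually_all.mpr E3
      filter_upwards [hall1, hall2, hall3, self_mem_nhdsWithin] with z h1 h2 h3 hz
      have hh : 0 < z - t := sub_pos.mpr hz
      have hsum : M z - M t ≤ (n : ℝ) * ((4*K*M t + 3*ρ) * (z - t)) := by
        rw [hMdef z, hMdef t, ← Finset.sum_sub_distrib]
        have hb : ∀ j ∈ Finset.univ,
            (max (-(A z j)) 0 + max (B z j) 0 + max (a z j - ah z j) 0)
            - (max (-(A t j)) 0 + max (B t j) 0 + max (a t j - ah t j) 0)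
            ≤ (4*K*M t + 3*ρ) * (z - t) := by
          intro j _
          have e1 := h1 j
          have e2 := h2 j
          have e3 := h3 j
          linarith
        calc ∑ j : Fin n, ((max (-(A z j)) 0 + max (B z j) 0 + max (a z j - ah z j) 0)
              - (max (-(A t j)) 0 + max (B t j) 0 + max (a t j - ah t j) 0))
            ≤ ∑ _j : Fin n, (4*K*M t + 3*ρ) * (z - t) := Finset.sum_le_sum hb
          _ = (n : ℝ) * ((4*K*M t + 3*ρ) * (z - t)) := by
            rw [Finset.sum_const, Finset.card_univ, Fintype.card_fin, nsmul_eq_mul]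
      have h12 : (z - t)⁻¹ * (M z - M t) ≤ (n:ℝ) * (4*K*M t + 3*ρ) := by
        have h13 := mul_le_mul_of_nonneg_left hsum (inv_nonneg.mpr hh.le)
        have h14 : (z - t)⁻¹ * ((n:ℝ) * ((4*K*M t + 3*ρ) * (z - t)))
            = (n:ℝ) * (4*K*M t + 3*ρ) := by
          field_simp
        linarith
      have h15 : (n:ℝ) * (4*K*M t + 3*ρ) < r := by
        nlinarith [hMnonneg t, hρ]
      linarith
    -- apply Grönwall
    intro u hu
    have hcontOn : ContinuousOn M (Set.Icc t0 (t0 + ε/2)) := fun x hx =>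
      (hMcont x (le_trans ht0 hx.1)).continuousWithinAt
    have hfreq : ∀ x ∈ Set.Ico t0 (t0 + ε/2), ∀ r,
        (fun u => (4*(n:ℝ)*K + 1) * M u) x < r →
        ∃ᶠ z in 𝓝[>] x, (z - x)⁻¹ * (M z - M x) < r := fun x hx r hr =>
      (KEY x hx r hr).frequently
    have hgron := le_gronwallBound_of_liminf_deriv_right_le (f := M)
      (f' := fun u => (4*(n:ℝ)*K + 1) * M u) (δ := 0) (K := 4*(n:ℝ)*K + 1) (ε := 0)
      hcontOn hfreq (le_of_eq hMt0) (fun x _ => by simp) u hu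
    rw [gronwallBound_ε0_δ0] at hgron
    exact le_antisymm hgron (hMnonneg u)
  -- GLOBAL INVARIANCE by a connectedness (sSup) argument
  have key : ∀ t ∈ Set.Ici (0:ℝ), M t = 0 := by
    by_contra hcon
    push_neg at hcon
    obtain ⟨T, hT, hMT⟩ := hcon
    have hT0 : (0:ℝ) ≤ T := hT
    set s : Set ℝ := {t : ℝ | t ∈ Set.Icc 0 T ∧ ∀ u ∈ Set.Icc 0 t, M u = 0} with hsdef
    have h0s : (0:ℝ) ∈ s := by
      refine ⟨⟨le_refl 0, hT0⟩, fun u hu => ?_⟩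
      have : u = 0 := le_antisymm hu.2 hu.1
      rw [this]; exact hM0
    have hbdd : BddAbove s := ⟨T, fun x hx => hx.1.2⟩
    set τ := sSup s with hτdef
    have hτ0 : 0 ≤ τ := le_csSup hbdd h0s
    have hτT : τ ≤ T := csSup_le ⟨0, h0s⟩ fun x hx => hx.1.2
    have hτlt : ∀ u, 0 ≤ u → u < τ → M u = 0 := by
      intro u hu huτ
      obtain ⟨x, hxs, hux⟩ := exists_lt_of_lt_csSup ⟨0, h0s⟩ huτ
      exact hxs.2 u ⟨hu, hux.le⟩
    have hτzero : M τ = 0 := by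
      rcases eq_or_lt_of_le hτ0 with heq | hpos
      · rw [← heq]; exact hM0
      · have h1 : Tendsto M (𝓝[<] τ) (𝓝 (M τ)) :=
          ((hMcont τ hτ0).tendsto).mono_left nhdsWithin_le_nhds
        have h2 : ∀ᶠ u in 𝓝[<] τ, M u = 0 := by
          filter_upwards [Ioo_mem_nhdsLT_of_mem (⟨hpos, le_refl τ⟩ : τ ∈ Set.Ioc 0 τ)]
            with u hu
          exact hτlt u hu.1.le hu.2
        have h3 : Tendsto M (𝓝[<] τ) (𝓝 0) := (tendsto_congr' h2).mpr tendsto_const_nhds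
        exact tendsto_nhds_unique h1 h3
    obtain ⟨δ, hδ, hext⟩ := LOCAL τ hτ0 hτzero
    have hτT' : τ < T := lt_of_le_of_ne hτT fun h => hMT (h ▸ hτzero)
    have hmem : min (τ + δ) T ∈ s := by
      constructor
      · exact ⟨le_min (by linarith) hT0, min_le_right _ _⟩
      · intro u hu
        rcases le_or_gt u τ with h | h
        · rcases lt_or_eq_of_le h with h' | h'
          · exact hτlt u hu.1 h'
          · rw [h']; exact hτzero
        · exact hext u ⟨h.le, le_trans hu.2 (min_le_left _ _)⟩
    have hle : min (τ + δ) T ≤ τ := le_csSup hbdd hmem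
    have hlt : τ < min (τ + δ) T := lt_min (by linarith) hτT'
    linarith
  -- CONCLUSIONS
  constructor
  · intro t ht
    obtain ⟨hA0, hB0, hor⟩ := hMzero_imp t (key t ht)
    refine ⟨fun i => hor i, fun i => ?_, fun i => ?_⟩
    · have := hA0 i; rw [hAdef] at this; exact this
    · have := hB0 i; rw [hBdef] at this; exact this
  · intro t1 t2 ht1 ht12
    have hsub : Set.Icc t1 t2 ⊆ Set.Ici (0:ℝ) := fun x hx => le_trans ht1 hx.1
    have hint : interior (Set.Icc t1 t2) ⊆ Set.Ici (0:ℝ) := by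
      rw [interior_Icc]; exact fun x hx => le_trans ht1 hx.1.le
    constructor
    · intro i
      have hmono : MonotoneOn (fun u => a u i) (Set.Icc t1 t2) := by
        refine monotoneOn_of_hasDerivWithinAt_nonneg (convex_Icc t1 t2)
          (f' := fun u => A u i) (fun x hx => ?_) (fun x hx => ?_) (fun x hx => ?_)
        · exact ((hai i x (hsub hx)).continuousAt).continuousWithinAt
        · exact ((hai i x (hint hx)).hasDerivWithinAt)
        · exact (hMzero_imp x (key x (hint hx))).1 i
      exact hmono ⟨le_refl t1, ht12⟩ ⟨ht12, le_refl t2⟩ ht12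
    · intro i
      have hmono : AntitoneOn (fun u => ah u i) (Set.Icc t1 t2) := by
        refine antitoneOn_of_hasDerivWithinAt_nonpos (convex_Icc t1 t2)
          (f' := fun u => B u i) (fun x hx => ?_) (fun x hx => ?_) (fun x hx => ?_)
        · exact ((hahi i x (hsub hx)).continuousAt).continuousWithinAt
        · exact ((hahi i x (hint hx)).hasDerivWithinAt)
        · exact (hMzero_imp x (key x (hint hx))).2.1 i
      exact hmono ⟨le_refl t1, ht12⟩ ⟨ht12, le_refl t2⟩ ht12
end

section
/- (Theorem 1, Part 1) Suppose F is mixed-monotone with respect to a decomposition function d, and let (a, â) : [0, ∞) → ℝⁿ × ℝⁿ be a solution of the deterministic embedding ODE (ȧ, ȧ̂) = e(a, â) with a(0) ⪯ â(0) and 0 ⪯_SE e(a(0), â(0)). Then for every T ≥ 0, the hyperrectangle [a(T), â(T)] is robustly forward invariant for ẋ = F(x, w): every solution x of ẋ = F(x, w(t)) under any piecewise continuous disturbance w valued in 𝒲 with x(0) ∈ [a(T), â(T)] satisfies x(t) ∈ [a(T), â(T)] for all t ≥ 0 in its interval of existence. -/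
open Set Function Filter Topology

lemma le_update_induction {ι : Type*} [Fintype ι] [DecidableEq ι]
    {g : (ι → ℝ) → ℝ} {x y : ι → ℝ}
    (h : ∀ j (z : ι → ℝ), (∀ k, z k = x k ∨ z k = y k) →
          g (Function.update z j (x j)) ≤ g (Function.update z j (y j))) :
    g x ≤ g y := by
  have key : ∀ S : Finset ι, g x ≤ g (fun k => if k ∈ S then y k else x k) := by
    intro S
    induction S using Finset.induction_on with
    | empty => simp
    | @insert j S hj ih =>
      refine ih.trans ?_
      have hgrid : ∀ k, (fun k => if k ∈ S then y k else x k) k = x k ∨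
          (fun k => if k ∈ S then y k else x k) k = y k := by
        intro k; by_cases hk : k ∈ S <;> simp [hk]
      have h1 : (fun k => if k ∈ S then y k else x k) =
          Function.update (fun k => if k ∈ S then y k else x k) j (x j) := by
        funext k
        rcases eq_or_ne k j with rfl | hk
        · simp [hj]
        · simp [Function.update_of_ne hk]
      have h2 : (fun k => if k ∈ insert j S then y k else x k) =
          Function.update (fun k => if k ∈ S then y k else x k) j (y j) := by
        funext k
        rcases eq_or_ne k j with rfl | hk
        · simp
        · simp [Function.update_of_ne hk, Finset.mem_insert, hk]
      rw [h2]
      nth_rewrite 1 [h1]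
      exact h j _ hgrid
  have := key Finset.univ
  simpa using this

section DMono
variable {n m : ℕ} {wl wu : Fin m → ℝ}
  {F : (Fin n → ℝ) → (Fin m → ℝ) → (Fin n → ℝ)}
  {d : (Fin n → ℝ) → (Fin m → ℝ) → (Fin n → ℝ) → (Fin m → ℝ) → (Fin n → ℝ)}

lemma dC1 (hd : IsDecompositionFunction wl wu F d) (i : Fin n)
    {u v uh vh : Fin n → ℝ} {w wh : Fin m → ℝ}
    (hw : w ∈ Set.Icc wl wu) (hwh : wh ∈ Set.Icc wl wu)
    (huv : u ≤ v) (hi : u i = v i) (hhv : vh ≤ uh) :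
    d u w uh wh i ≤ d v w vh wh i := by
  obtain ⟨-, -, hx, hxh, -, -⟩ := hd
  have step1 : d u w uh wh i ≤ d v w uh wh i := by
    refine le_update_induction (g := fun z => d z w uh wh i) (x := u) (y := v) ?_
    intro j z _
    rcases eq_or_ne j i with rfl | hj
    · rw [hi]
    · exact hx i j hj z uh (u j) (v j) (huv j) w hw wh hwh
  refine step1.trans ?_
  refine le_update_induction (g := fun z => d v w z wh i) (x := uh) (y := vh) ?_
  intro j z _
  exact hxh i j v z (vh j) (uh j) (hhv j) w hw wh hwh

lemma dW (hd : IsDecompositionFunction wl wu F d) (i : Fin n)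
    (x xh : Fin n → ℝ) {w w' wh wh' : Fin m → ℝ}
    (hw : w ∈ Set.Icc wl wu) (hw' : w' ∈ Set.Icc wl wu)
    (hwh : wh ∈ Set.Icc wl wu) (hwh' : wh' ∈ Set.Icc wl wu)
    (hle : w ≤ w') (hle' : wh' ≤ wh) :
    d x w xh wh i ≤ d x w' xh wh' i := by
  obtain ⟨-, -, -, -, hww, hwhh⟩ := hd
  have step1 : d x w xh wh i ≤ d x w' xh wh i := by
    refine le_update_induction (g := fun z => d x z xh wh i) (x := w) (y := w') ?_
    intro k z hz
    have hzmem : z ∈ Set.Icc wl wu := by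
      constructor <;> intro j <;> rcases hz j with h' | h' <;> rw [h']
      · exact hw.1 j
      · exact hw'.1 j
      · exact hw.2 j
      · exact hw'.2 j
    exact hww i k x xh (w k) (w' k) (hw.1 k) (hle k) (hw'.2 k) z hzmem wh hwh
  refine step1.trans ?_
  refine le_update_induction (g := fun z => d x w' xh z i) (x := wh) (y := wh') ?_
  intro k z hz
  have hzmem : z ∈ Set.Icc wl wu := by
    constructor <;> intro j <;> rcases hz j with h' | h' <;> rw [h']
    · exact hwh.1 j
    · exact hwh'.1 j
    · exact hwh.2 j
    · exact hwh'.2 j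
  exact hwhh i k x xh (wh' k) (wh k) (hwh'.1 k) (hle' k) (hwh.2 k) w' hw' z hzmem
end DMono
lemma locallyLipschitz_uniform {E G : Type*} [MetricSpace E] [MetricSpace G]
    {f : E → G} (hf : LocallyLipschitz f) {K : Set E} (hK : IsCompact K) :
    ∃ L : ℝ, 0 ≤ L ∧ ∃ r : ℝ, 0 < r ∧ ∀ p ∈ K, ∀ q1 ∈ Metric.closedBall p r,
      ∀ q2 ∈ Metric.closedBall p r, dist (f q1) (f q2) ≤ L * dist q1 q2 := by
  -- choose for each p a radius and constant
  have hchoice : ∀ p : E, ∃ C : NNReal, ∃ R : ℝ, 0 < R ∧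
      LipschitzOnWith C f (Metric.closedBall p R) := by
    intro p
    obtain ⟨C, t, ht, hlip⟩ := hf p
    obtain ⟨ε, hε, hball⟩ := Metric.mem_nhds_iff.mp ht
    exact ⟨C, ε / 2, by positivity,
      hlip.mono ((Metric.closedBall_subset_ball (by linarith)).trans hball)⟩
  choose C R hR hlip using hchoice
  rcases K.eq_empty_or_nonempty with rfl | hne
  · exact ⟨1, zero_le_one, 1, one_pos, by simp⟩
  obtain ⟨s, hsK, hcover⟩ := hK.elim_nhds_subcover (fun p => Metric.ball p (R p / 2))
    (fun p _ => Metric.ball_mem_nhds p (by have := hR p; positivity))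
  have hsne : s.Nonempty := by
    rcases hne with ⟨p, hp⟩
    rcases Set.mem_iUnion₂.mp (hcover hp) with ⟨q, hq, _⟩
    exact ⟨q, hq⟩
  set L : ℝ := (s.sup' hsne fun p => (C p : ℝ))
  set r : ℝ := (s.inf' hsne fun p => R p / 2)
  have hr : 0 < r := by
    rw [Finset.lt_inf'_iff]
    intro p _
    have := hR p; positivity
  refine ⟨L, ?_, r, hr, ?_⟩
  · rcases hsne with ⟨p, hp⟩
    exact le_trans (C p).coe_nonneg (Finset.le_sup' (fun p => (C p : ℝ)) hp)
  intro p hp q1 hq1 q2 hq2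
  rcases Set.mem_iUnion₂.mp (hcover hp) with ⟨q, hq, hpq⟩
  have hsub : Metric.closedBall p r ⊆ Metric.closedBall q (R q) := by
    intro z hz
    have h1 : dist z p ≤ r := Metric.mem_closedBall.mp hz
    have h2 : dist p q < R q / 2 := Metric.mem_ball.mp hpq
    have h3 : r ≤ R q / 2 := Finset.inf'_le _ hq
    exact Metric.mem_closedBall.mpr ((dist_triangle z p q).trans (by linarith))
  have hlipq := (hlip q).mono hsub
  have := hlipq.dist_le_mul q1 hq1 q2 hq2
  refine this.trans (mul_le_mul_of_nonneg_right ?_ dist_nonneg)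
  exact Finset.le_sup' (fun p => (C p : ℝ)) hq

lemma inv_lemma {ι : Type*} [Fintype ι]
    (Y Y' : ℝ → ι → ℝ) (T' L c Δ : ℝ)
    (hL : 0 ≤ L) (hc : 0 ≤ c)
    (hderiv : ∀ i, ∀ t ∈ Set.Icc (0:ℝ) T', HasDerivAt (fun t => Y t i) (Y' t i) t)
    (h0 : ∀ i, -c ≤ Y 0 i)
    (hcΔ : c * Real.exp ((L + 1) * T') < Δ)
    (hbd : ∀ t ∈ Set.Icc (0:ℝ) T', ∀ i, ∀ δ : ℝ, 0 < δ → δ ≤ Δ →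
      (∀ j, -δ ≤ Y t j) → Y t i = -δ → -(L * δ) ≤ Y' t i) :
    ∀ t ∈ Set.Icc (0:ℝ) T', ∀ i, -(c * Real.exp ((L + 1) * t)) ≤ Y t i := by
  set K : ℝ := L + 1 with hK
  have hKpos : 0 < K := by positivity
  -- the ε-perturbed claim
  have claim : ∀ ε : ℝ, 0 < ε → (c + ε) * Real.exp (K * T') ≤ Δ →
      ∀ t ∈ Set.Icc (0:ℝ) T', ∀ i, 0 < Y t i + (c + ε) * Real.exp (K * t) := by
    intro ε hε hεΔ
    set f : ι → ℝ → ℝ := fun i t => Y t i + (c + ε) * Real.exp (K * t) with hf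
    by_contra hcon
    push_neg at hcon
    obtain ⟨t₁, ht₁, i₁, hi₁⟩ := hcon
    have hcε : 0 < c + ε := by linarith
    -- continuity of each f i on Icc
    have hfd : ∀ i, ∀ t ∈ Set.Icc (0:ℝ) T',
        HasDerivAt (f i) (Y' t i + (c + ε) * (Real.exp (K * t) * K)) t := by
      intro i t ht
      refine (hderiv i t ht).add (HasDerivAt.const_mul _ ?_)
      have h1 : HasDerivAt (fun t : ℝ => K * t) K t := by
        simpa using (hasDerivAt_id t).const_mul K
      exact (Real.hasDerivAt_exp (K * t)).comp t h1
    have hfc : ∀ i, ContinuousOn (f i) (Set.Icc (0:ℝ) T') :=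
      fun i => fun t ht => ((hfd i t ht).continuousAt).continuousWithinAt
    set S : Set ℝ := ⋃ i, (Set.Icc (0:ℝ) T' ∩ (f i) ⁻¹' Set.Iic 0) with hS
    have hSclosed : IsClosed S :=
      isClosed_iUnion_of_finite fun i =>
        (hfc i).preimage_isClosed_of_isClosed isClosed_Icc isClosed_Iic
    have hSne : S.Nonempty := ⟨t₁, Set.mem_iUnion.mpr ⟨i₁, ht₁, hi₁⟩⟩
    have hSbdd : BddBelow S := by
      refine (bddBelow_Icc : BddBelow (Set.Icc (0:ℝ) T')).mono ?_
      intro t ht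
      rcases Set.mem_iUnion.mp ht with ⟨i, hi, _⟩
      exact hi
    set ts : ℝ := sInf S with hts
    have htsS : ts ∈ S := hSclosed.csInf_mem hSne hSbdd
    obtain ⟨i₀, htsIcc, hfi₀⟩ : ∃ i, ts ∈ Set.Icc (0:ℝ) T' ∧ f i ts ≤ 0 := by
      rcases Set.mem_iUnion.mp htsS with ⟨i, hi, hle⟩
      exact ⟨i, hi, hle⟩
    have h0pos : ∀ j, 0 < f j 0 := by
      intro j
      have := h0 j
      simp only [hf, mul_zero, Real.exp_zero, mul_one]
      linarith
    have hnot : ∀ t, 0 ≤ t → t < ts → ∀ j, 0 < f j t := by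
      intro t ht htlt j
      have htT' : t ≤ T' := le_trans htlt.le htsIcc.2
      by_contra hle
      push_neg at hle
      have : t ∈ S := Set.mem_iUnion.mpr ⟨j, ⟨ht, htT'⟩, hle⟩
      exact absurd (csInf_le hSbdd this) (not_le.mpr htlt)
    have htspos : 0 < ts := by
      rcases lt_or_eq_of_le htsIcc.1 with h | h
      · exact h
      · exact absurd hfi₀ (not_le.mpr (h ▸ h0pos i₀))
    -- left limits: f j ts ≥ 0 for every j
    have hIoo : Set.Ioo (0:ℝ) ts ∈ 𝓝[<] ts :=
      Ioo_mem_nhdsLT htspos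
    have hleft : ∀ j, 0 ≤ f j ts := by
      intro j
      have htend : Filter.Tendsto (f j) (𝓝[<] ts) (𝓝 (f j ts)) :=
        ((hfd j ts htsIcc).continuousAt.tendsto.mono_left nhdsWithin_le_nhds)
      refine ge_of_tendsto htend ?_
      filter_upwards [hIoo] with t ht
      exact (hnot t ht.1.le ht.2 j).le
    have hfi₀0 : f i₀ ts = 0 := le_antisymm hfi₀ (hleft i₀)
    set δ : ℝ := (c + ε) * Real.exp (K * ts) with hδ
    have hδpos : 0 < δ := by positivity
    have hδΔ : δ ≤ Δ := by
      refine le_trans ?_ hεΔ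
      exact mul_le_mul_of_nonneg_left
        (Real.exp_le_exp.mpr (mul_le_mul_of_nonneg_left htsIcc.2 hKpos.le)) hcε.le
    have hYts : Y ts i₀ = -δ := by
      have : Y ts i₀ + δ = 0 := hfi₀0
      linarith
    have hall : ∀ j, -δ ≤ Y ts j := by
      intro j
      have := hleft j
      simp only [hf] at this
      linarith
    have hlow : -(L * δ) ≤ Y' ts i₀ := hbd ts htsIcc i₀ δ hδpos hδΔ hall hYts
    -- derivative of f i₀ at ts is nonpositive
    have hslope : Filter.Tendsto (slope (f i₀) ts) (𝓝[<] ts)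
        (𝓝 (Y' ts i₀ + (c + ε) * (Real.exp (K * ts) * K))) := by
      have := hasDerivAt_iff_tendsto_slope.mp (hfd i₀ ts htsIcc)
      exact this.mono_left (nhdsWithin_mono _ fun t ht => ne_of_lt ht)
    have hderivnp : Y' ts i₀ + (c + ε) * (Real.exp (K * ts) * K) ≤ 0 := by
      refine le_of_tendsto hslope ?_
      filter_upwards [hIoo] with t ht
      have hnum : 0 ≤ f i₀ t := (hnot t ht.1.le ht.2 i₀).le
      rw [slope_def_field, div_eq_inv_mul]
      rw [hfi₀0, sub_zero]
      apply mul_nonpos_of_nonpos_of_nonneg _ hnum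
      simp only [inv_nonpos]
      linarith [ht.2]
    have : (c + ε) * (Real.exp (K * ts) * K) = K * δ := by ring
    rw [this] at hderivnp
    -- contradiction
    nlinarith
  -- take ε → 0
  intro t ht i
  by_contra hcon
  push_neg at hcon
  have hexpT : 0 < Real.exp (K * T') := Real.exp_pos _
  have hexpt : 0 < Real.exp (K * t) := Real.exp_pos _
  set ε : ℝ := min ((Δ - c * Real.exp (K * T')) / Real.exp (K * T'))
      ((-(Y t i) - c * Real.exp (K * t)) / Real.exp (K * t)) with hε
  have hε1 : 0 < (Δ - c * Real.exp (K * T')) / Real.exp (K * T') :=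
    div_pos (by linarith) hexpT
  have hε2 : 0 < (-(Y t i) - c * Real.exp (K * t)) / Real.exp (K * t) :=
    div_pos (by linarith) hexpt
  have hεpos : 0 < ε := lt_min hε1 hε2
  have hεΔ : (c + ε) * Real.exp (K * T') ≤ Δ := by
    have : ε ≤ (Δ - c * Real.exp (K * T')) / Real.exp (K * T') := min_le_left _ _
    have h' : ε * Real.exp (K * T') ≤ Δ - c * Real.exp (K * T') := by
      rw [div_eq_mul_inv] at this
      calc ε * Real.exp (K * T') ≤ ((Δ - c * Real.exp (K * T')) * (Real.exp (K * T'))⁻¹)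
            * Real.exp (K * T') := by nlinarith
        _ = Δ - c * Real.exp (K * T') := by field_simp
    nlinarith
  have := claim ε hεpos hεΔ t ht i
  have h' : ε * Real.exp (K * t) ≤ -(Y t i) - c * Real.exp (K * t) := by
    have h2 : ε ≤ (-(Y t i) - c * Real.exp (K * t)) / Real.exp (K * t) := min_le_right _ _
    rw [div_eq_mul_inv] at h2
    calc ε * Real.exp (K * t) ≤ ((-(Y t i) - c * Real.exp (K * t)) * (Real.exp (K * t))⁻¹)
          * Real.exp (K * t) := by nlinarith
      _ = -(Y t i) - c * Real.exp (K * t) := by field_simp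
  nlinarith

section Step1
variable {n m : ℕ} {wl wu : Fin m → ℝ}
  {F : (Fin n → ℝ) → (Fin m → ℝ) → (Fin n → ℝ)}
  {d : (Fin n → ℝ) → (Fin m → ℝ) → (Fin n → ℝ) → (Fin m → ℝ) → (Fin n → ℝ)}

lemma SE_propagation (hwlu : wl ≤ wu) (hd : IsDecompositionFunction wl wu F d)
    (a ah : ℝ → (Fin n → ℝ))
    (ha : ∀ t ∈ Set.Ici (0:ℝ), HasDerivAt a (d (a t) wl (ah t) wu) t)
    (hah : ∀ t ∈ Set.Ici (0:ℝ), HasDerivAt ah (d (ah t) wu (a t) wl) t)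
    (h0SE : (0 : Fin n → ℝ) ≤ d (a 0) wl (ah 0) wu ∧ d (ah 0) wu (a 0) wl ≤ (0 : Fin n → ℝ)) :
    ∀ T : ℝ, 0 ≤ T →
      ((0 : Fin n → ℝ) ≤ d (a T) wl (ah T) wu ∧ d (ah T) wu (a T) wl ≤ (0 : Fin n → ℝ)) := by
  intro T hT
  have hwlm : wl ∈ Set.Icc wl wu := ⟨le_refl _, hwlu⟩
  have hwum : wu ∈ Set.Icc wl wu := ⟨hwlu, le_refl _⟩
  set φ : ℝ → Fin n → ℝ := fun t => d (a t) wl (ah t) wu with hφ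
  set ψ : ℝ → Fin n → ℝ := fun t => d (ah t) wu (a t) wl with hψ
  set D : ((Fin n → ℝ) × (Fin m → ℝ)) × ((Fin n → ℝ) × (Fin m → ℝ)) → (Fin n → ℝ) :=
    fun p => d p.1.1 p.1.2 p.2.1 p.2.2 with hD
  -- continuity of a and ah on [0, T+1]
  have haC : ContinuousOn a (Set.Icc (0:ℝ) (T+1)) :=
    fun t ht => ((ha t ht.1).continuousAt).continuousWithinAt
  have hahC : ContinuousOn ah (Set.Icc (0:ℝ) (T+1)) :=
    fun t ht => ((hah t ht.1).continuousAt).continuousWithinAt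
  -- the compact tube around the embedding trajectory
  set K₁ : Set (((Fin n → ℝ) × (Fin m → ℝ)) × ((Fin n → ℝ) × (Fin m → ℝ))) :=
    ((fun t => ((a t, wl), (ah t, wu))) '' Set.Icc (0:ℝ) (T+1)) ∪
    ((fun t => ((ah t, wu), (a t, wl))) '' Set.Icc (0:ℝ) (T+1)) with hK₁
  have hK₁c : IsCompact K₁ := by
    refine IsCompact.union ?_ ?_
    · exact isCompact_Icc.image_of_continuousOn
        (((haC.prodMk continuousOn_const)).prodMk ((hahC.prodMk continuousOn_const)))
    · exact isCompact_Icc.image_of_continuousOn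
        (((hahC.prodMk continuousOn_const)).prodMk ((haC.prodMk continuousOn_const)))
  obtain ⟨L, hL0, r, hr, hlip⟩ := locallyLipschitz_uniform hd.1 hK₁c
  set c : ℝ → ℝ := fun s => ‖a s - a 0 - s • φ 0‖ + ‖ah s - ah 0 - s • ψ 0‖ with hc
  have hcnonneg : ∀ s, 0 ≤ c s := fun s => by positivity
  -- the main estimate for small positive s
  have main : ∀ s : ℝ, 0 < s → s ≤ 1 → c s * Real.exp ((L+1)*T) < r →
      ∀ i : Fin n, (-(c s * Real.exp ((L+1)*T)) ≤ a (T+s) i - a T i)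
        ∧ (-(c s * Real.exp ((L+1)*T)) ≤ ah T i - ah (T+s) i) := by
    intro s hs hs1 hsr
    set Y : ℝ → (Fin n ⊕ Fin n) → ℝ := fun t =>
      Sum.elim (fun i => a (t+s) i - a t i) (fun i => ah t i - ah (t+s) i) with hY
    set Y' : ℝ → (Fin n ⊕ Fin n) → ℝ := fun t =>
      Sum.elim (fun i => φ (t+s) i - φ t i) (fun i => ψ t i - ψ (t+s) i) with hY'
    have hshift : ∀ t : ℝ, 0 ≤ t → HasDerivAt (fun t => a (t+s)) (φ (t+s)) t ∧
        HasDerivAt (fun t => ah (t+s)) (ψ (t+s)) t := by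
      intro t ht
      have hts : (0:ℝ) ≤ t + s := by linarith
      have hid : HasDerivAt (fun t : ℝ => t + s) 1 t := (hasDerivAt_id t).add_const s
      constructor
      · simpa [Function.comp_def] using (ha (t+s) hts).scomp t hid
      · simpa [Function.comp_def] using (hah (t+s) hts).scomp t hid
    have hderiv : ∀ i, ∀ t ∈ Set.Icc (0:ℝ) T, HasDerivAt (fun t => Y t i) (Y' t i) t := by
      rintro (i | i) t ht
      · exact ((hasDerivAt_pi.mp (hshift t ht.1).1 i).sub
          (hasDerivAt_pi.mp (ha t ht.1) i))
      · exact ((hasDerivAt_pi.mp (hah t ht.1) i).sub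
          (hasDerivAt_pi.mp (hshift t ht.1).2 i))
    have h0 : ∀ i, -(c s) ≤ Y 0 i := by
      rintro (i | i)
      · have herr : |(a s - a 0 - s • φ 0) i| ≤ c s := by
          refine le_trans ?_ (le_add_of_nonneg_right (norm_nonneg _))
          exact norm_le_pi_norm (a s - a 0 - s • φ 0) i
        have hφ0 : 0 ≤ φ 0 i := h0SE.1 i
        have : a s i - a 0 i = s * φ 0 i + (a s - a 0 - s • φ 0) i := by
          simp only [Pi.sub_apply, Pi.smul_apply, smul_eq_mul]; ring
        simp only [hY, Sum.elim_inl, zero_add]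
        rw [this]
        have := abs_le.mp herr
        nlinarith
      · have herr : |(ah s - ah 0 - s • ψ 0) i| ≤ c s := by
          refine le_trans ?_ (le_add_of_nonneg_left (norm_nonneg _))
          exact norm_le_pi_norm (ah s - ah 0 - s • ψ 0) i
        have hψ0 : ψ 0 i ≤ 0 := h0SE.2 i
        have : ah 0 i - ah s i = -(s * ψ 0 i) - (ah s - ah 0 - s • ψ 0) i := by
          simp only [Pi.sub_apply, Pi.smul_apply, smul_eq_mul]; ring
        simp only [hY, Sum.elim_inr, zero_add]
        rw [this]
        have := abs_le.mp herr
        nlinarith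
    have hbd : ∀ t ∈ Set.Icc (0:ℝ) T, ∀ i, ∀ δ : ℝ, 0 < δ → δ ≤ r →
        (∀ j, -δ ≤ Y t j) → Y t i = -δ → -(L * δ) ≤ Y' t i := by
      intro t ht i δ hδ hδr hall hit
      have htss : t + s ∈ Set.Icc (0:ℝ) (T+1) := ⟨by linarith [ht.1], by linarith [ht.2]⟩
      rcases i with i | i
      · -- lower bound for the a-block
        set u := a t with hu; set uh := ah t with huh
        set v := a (t+s) with hv; set vh := ah (t+s) with hvh
        set v'' : Fin n → ℝ := fun j => if j = i then u i else max (v j) (u j) with hv''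
        set vh'' : Fin n → ℝ := fun j => min (vh j) (uh j) with hvh''
        have hq1K : ((v, wl), (vh, wu)) ∈ K₁ := Or.inl ⟨t+s, htss, rfl⟩
        have hd1 : dist v v'' ≤ δ := by
          refine (dist_pi_le_iff hδ.le).mpr fun j => ?_
          rw [Real.dist_eq]
          rcases eq_or_ne j i with rfl | hj
          · have : v j - u j = -δ := hit
            simp only [hv'', if_pos rfl]
            rw [abs_le]; constructor <;> linarith
          · have hYj : -δ ≤ v j - u j := hall (Sum.inl j)
            simp only [hv'', if_neg hj]
            rw [abs_le]
            rcases le_total (u j) (v j) with h' | h'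
            · rw [max_eq_left h']; constructor <;> linarith
            · rw [max_eq_right h']; constructor <;> linarith
        have hd2 : dist vh vh'' ≤ δ := by
          refine (dist_pi_le_iff hδ.le).mpr fun j => ?_
          rw [Real.dist_eq]
          have hYj : -δ ≤ uh j - vh j := hall (Sum.inr j)
          rw [abs_le]
          rcases le_total (vh j) (uh j) with h' | h'
          · simp only [hvh'', min_eq_left h']; constructor <;> linarith
          · simp only [hvh'', min_eq_right h']; constructor <;> linarith
        have hdistq : dist (((v, wl), (vh, wu)) :
            ((Fin n → ℝ) × (Fin m → ℝ)) × ((Fin n → ℝ) × (Fin m → ℝ)))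
            (((v'', wl), (vh'', wu))) ≤ δ := by
          rw [Prod.dist_eq, Prod.dist_eq, Prod.dist_eq]
          simp only [dist_self]
          exact max_le (max_le hd1 hδ.le) (max_le hd2 hδ.le)
        have hlipest : dist (D ((v, wl), (vh, wu))) (D ((v'', wl), (vh'', wu))) ≤ L * δ := by
          have := hlip _ hq1K ((v, wl), (vh, wu)) (Metric.mem_closedBall_self hr.le)
            (((v'', wl), (vh'', wu))) (Metric.mem_closedBall.mpr
              (by rw [dist_comm]; exact hdistq.trans hδr))
          exact this.trans (mul_le_mul_of_nonneg_left hdistq hL0)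
        have hcomp : |d v wl vh wu i - d v'' wl vh'' wu i| ≤ L * δ := by
          have := dist_le_pi_dist (D ((v, wl), (vh, wu))) (D ((v'', wl), (vh'', wu))) i
          rw [Real.dist_eq] at this
          exact this.trans hlipest
        have hmono : d u wl uh wu i ≤ d v'' wl vh'' wu i := by
          refine dC1 hd i hwlm hwum ?_ ?_ ?_
          · intro j
            rcases eq_or_ne j i with rfl | hj
            · simp [hv'']
            · simp only [hv'', if_neg hj]; exact le_max_right _ _
          · simp [hv'']
          · intro j; exact min_le_right _ _
        have habs := abs_le.mp hcomp
        simp only [hY', Sum.elim_inl]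
        have : φ (t+s) i = d v wl vh wu i := rfl
        rw [this]
        have : φ t i = d u wl uh wu i := rfl
        rw [this]
        linarith
      · -- upper bound for the ah-block
        set u := ah t with hu; set uh := a t with huh
        set v := ah (t+s) with hv; set vh := a (t+s) with hvh
        set v'' : Fin n → ℝ := fun j => if j = i then u i else min (v j) (u j) with hv''
        set vh'' : Fin n → ℝ := fun j => max (vh j) (uh j) with hvh''
        have hq1K : ((v, wu), (vh, wl)) ∈ K₁ := Or.inr ⟨t+s, htss, rfl⟩
        have hd1 : dist v v'' ≤ δ := by
          refine (dist_pi_le_iff hδ.le).mpr fun j => ?_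
          rw [Real.dist_eq]
          rcases eq_or_ne j i with rfl | hj
          · have : u j - v j = -δ := hit
            simp only [hv'', if_pos rfl]
            rw [abs_le]; constructor <;> linarith
          · have hYj : -δ ≤ u j - v j := hall (Sum.inr j)
            simp only [hv'', if_neg hj]
            rw [abs_le]
            rcases le_total (v j) (u j) with h' | h'
            · rw [min_eq_left h']; constructor <;> linarith
            · rw [min_eq_right h']; constructor <;> linarith
        have hd2 : dist vh vh'' ≤ δ := by
          refine (dist_pi_le_iff hδ.le).mpr fun j => ?_
          rw [Real.dist_eq]
          have hYj : -δ ≤ vh j - uh j := hall (Sum.inl j)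
          rw [abs_le]
          rcases le_total (uh j) (vh j) with h' | h'
          · simp only [hvh'', max_eq_left h']; constructor <;> linarith
          · simp only [hvh'', max_eq_right h']; constructor <;> linarith
        have hdistq : dist (((v, wu), (vh, wl)) :
            ((Fin n → ℝ) × (Fin m → ℝ)) × ((Fin n → ℝ) × (Fin m → ℝ)))
            (((v'', wu), (vh'', wl))) ≤ δ := by
          rw [Prod.dist_eq, Prod.dist_eq, Prod.dist_eq]
          simp only [dist_self]
          exact max_le (max_le hd1 hδ.le) (max_le hd2 hδ.le)
        have hlipest : dist (D ((v, wu), (vh, wl))) (D ((v'', wu), (vh'', wl))) ≤ L * δ := by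
          have := hlip _ hq1K ((v, wu), (vh, wl)) (Metric.mem_closedBall_self hr.le)
            (((v'', wu), (vh'', wl))) (Metric.mem_closedBall.mpr
              (by rw [dist_comm]; exact hdistq.trans hδr))
          exact this.trans (mul_le_mul_of_nonneg_left hdistq hL0)
        have hcomp : |d v wu vh wl i - d v'' wu vh'' wl i| ≤ L * δ := by
          have := dist_le_pi_dist (D ((v, wu), (vh, wl))) (D ((v'', wu), (vh'', wl))) i
          rw [Real.dist_eq] at this
          exact this.trans hlipest
        have hmono : d v'' wu vh'' wl i ≤ d u wu uh wl i := by
          refine dC1 hd i hwum hwlm ?_ ?_ ?_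
          · intro j
            rcases eq_or_ne j i with rfl | hj
            · simp [hv'']
            · simp only [hv'', if_neg hj]; exact min_le_right _ _
          · simp [hv'']
          · intro j; exact le_max_right _ _
        have habs := abs_le.mp hcomp
        simp only [hY', Sum.elim_inr]
        have : ψ (t+s) i = d v wu vh wl i := rfl
        rw [this]
        have : ψ t i = d u wu uh wl i := rfl
        rw [this]
        linarith
    have := inv_lemma Y Y' T L (c s) r hL0 (hcnonneg s) hderiv h0 hsr hbd T
      ⟨hT, le_refl _⟩
    exact fun i => ⟨this (Sum.inl i), this (Sum.inr i)⟩
  -- limit as s → 0⁺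
  have hlo1 : Filter.Tendsto (fun s => ‖a s - a 0 - s • φ 0‖ / s) (𝓝[>] (0:ℝ)) (𝓝 0) := by
    have h := hasDerivAt_iff_isLittleO.mp (ha 0 (Set.mem_Ici.mpr (le_refl 0)))
    have h' := h.norm_norm
    have h'' : Filter.Tendsto (fun s : ℝ => ‖a s - a 0 - (s - 0) • φ 0‖ / ‖s - 0‖)
        (𝓝 (0:ℝ)) (𝓝 0) := by
      refine (Asymptotics.isLittleO_iff_tendsto ?_).mp h'
      intro x hx
      have : x - 0 = 0 := by simpa [Real.norm_eq_abs, abs_eq_zero] using hx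
      have hx0 : x = (0:ℝ) := by linarith
      simp [hx0]
    refine Filter.Tendsto.congr' ?_ (h''.mono_left nhdsWithin_le_nhds)
    filter_upwards [self_mem_nhdsWithin] with s hs
    have hs' : (0:ℝ) < s := hs
    rw [sub_zero, Real.norm_eq_abs, abs_of_pos hs']
  have hlo2 : Filter.Tendsto (fun s => ‖ah s - ah 0 - s • ψ 0‖ / s) (𝓝[>] (0:ℝ)) (𝓝 0) := by
    have h := hasDerivAt_iff_isLittleO.mp (hah 0 (Set.mem_Ici.mpr (le_refl 0)))
    have h' := h.norm_norm
    have h'' : Filter.Tendsto (fun s : ℝ => ‖ah s - ah 0 - (s - 0) • ψ 0‖ / ‖s - 0‖)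
        (𝓝 (0:ℝ)) (𝓝 0) := by
      refine (Asymptotics.isLittleO_iff_tendsto ?_).mp h'
      intro x hx
      have : x - 0 = 0 := by simpa [Real.norm_eq_abs, abs_eq_zero] using hx
      have hx0 : x = (0:ℝ) := by linarith
      simp [hx0]
    refine Filter.Tendsto.congr' ?_ (h''.mono_left nhdsWithin_le_nhds)
    filter_upwards [self_mem_nhdsWithin] with s hs
    have hs' : (0:ℝ) < s := hs
    rw [sub_zero, Real.norm_eq_abs, abs_of_pos hs']
  have hcs : Filter.Tendsto (fun s => c s / s) (𝓝[>] (0:ℝ)) (𝓝 0) := by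
    have := hlo1.add hlo2
    rw [add_zero] at this
    refine this.congr fun s => ?_
    rw [hc, add_div]
  have hc0 : Filter.Tendsto c (𝓝[>] (0:ℝ)) (𝓝 0) := by
    have hid : Filter.Tendsto (fun s : ℝ => s) (𝓝[>] (0:ℝ)) (𝓝 0) :=
      tendsto_id.mono_right nhdsWithin_le_nhds
    have := hcs.mul hid
    rw [mul_zero] at this
    refine Filter.Tendsto.congr' ?_ this
    filter_upwards [self_mem_nhdsWithin] with s hs
    have hs' : (0:ℝ) < s := hs
    field_simp
  have hcexp : Filter.Tendsto (fun s => c s * Real.exp ((L+1)*T)) (𝓝[>] (0:ℝ)) (𝓝 0) := by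
    have := hc0.mul_const (Real.exp ((L+1)*T))
    rwa [zero_mul] at this
  have hevr : ∀ᶠ s in 𝓝[>] (0:ℝ), c s * Real.exp ((L+1)*T) < r :=
    hcexp.eventually (gt_mem_nhds hr)
  have hev1 : ∀ᶠ s in 𝓝[>] (0:ℝ), s ≤ 1 := by
    filter_upwards [Ioo_mem_nhdsGT (zero_lt_one' ℝ)]
      with s hs
    exact hs.2.le
  have hquot : Filter.Tendsto (fun s => -(c s * Real.exp ((L+1)*T) / s)) (𝓝[>] (0:ℝ))
      (𝓝 0) := by
    have h1 : Filter.Tendsto (fun s => c s / s * Real.exp ((L+1)*T)) (𝓝[>] (0:ℝ)) (𝓝 0) := by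
      have := hcs.mul_const (Real.exp ((L+1)*T))
      rwa [zero_mul] at this
    have := h1.neg
    rw [neg_zero] at this
    refine this.congr fun s => ?_
    ring
  have hmapsto : Filter.Tendsto (fun s : ℝ => T + s) (𝓝[>] (0:ℝ)) (𝓝[≠] T) := by
    refine tendsto_nhdsWithin_of_tendsto_nhds_of_eventually_within _ ?_ ?_
    · have : Filter.Tendsto (fun s : ℝ => T + s) (𝓝 (0:ℝ)) (𝓝 (T + 0)) :=
        (continuous_const.add continuous_id).tendsto 0
      rw [add_zero] at this
      exact this.mono_left nhdsWithin_le_nhds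
    · filter_upwards [self_mem_nhdsWithin] with s hs
      have hs' : (0:ℝ) < s := hs
      simp only [Set.mem_compl_iff, Set.mem_singleton_iff]
      intro h
      nlinarith [congrArg (fun z => z - T) h]
  constructor
  · intro i
    have hslope : Filter.Tendsto (fun s => (a (T+s) i - a T i) / s) (𝓝[>] (0:ℝ))
        (𝓝 (φ T i)) := by
      have hda : HasDerivAt (fun t => a t i) (φ T i) T := hasDerivAt_pi.mp (ha T hT) i
      have h := (hasDerivAt_iff_tendsto_slope.mp hda).comp hmapsto
      refine Filter.Tendsto.congr' ?_ h
      filter_upwards [self_mem_nhdsWithin] with s hs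
      have hs' : (0:ℝ) < s := hs
      simp only [Function.comp]
      rw [slope_def_field]
      rw [add_sub_cancel_left]
    refine le_of_tendsto_of_tendsto hquot hslope ?_
    filter_upwards [self_mem_nhdsWithin, hev1, hevr] with s hs hs1 hsr
    have hs' : (0:ℝ) < s := hs
    have hmain := (main s hs' hs1 hsr i).1
    have := mul_le_mul_of_nonneg_right hmain (inv_nonneg.mpr hs'.le)
    simpa [div_eq_mul_inv, neg_mul] using this
  · intro i
    have hslope : Filter.Tendsto (fun s => (ah (T+s) i - ah T i) / s) (𝓝[>] (0:ℝ))
        (𝓝 (ψ T i)) := by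
      have hda : HasDerivAt (fun t => ah t i) (ψ T i) T := hasDerivAt_pi.mp (hah T hT) i
      have h := (hasDerivAt_iff_tendsto_slope.mp hda).comp hmapsto
      refine Filter.Tendsto.congr' ?_ h
      filter_upwards [self_mem_nhdsWithin] with s hs
      have hs' : (0:ℝ) < s := hs
      simp only [Function.comp]
      rw [slope_def_field]
      rw [add_sub_cancel_left]
    have hquot' : Filter.Tendsto (fun s => c s * Real.exp ((L+1)*T) / s) (𝓝[>] (0:ℝ))
        (𝓝 0) := by
      have h1 : Filter.Tendsto (fun s => c s / s * Real.exp ((L+1)*T)) (𝓝[>] (0:ℝ))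
          (𝓝 0) := by
        have := hcs.mul_const (Real.exp ((L+1)*T))
        rwa [zero_mul] at this
      refine h1.congr fun s => ?_
      ring
    refine le_of_tendsto_of_tendsto hslope hquot' ?_
    filter_upwards [self_mem_nhdsWithin, hev1, hevr] with s hs hs1 hsr
    have hs' : (0:ℝ) < s := hs
    have hmain := (main s hs' hs1 hsr i).2
    have h' : ah (T+s) i - ah T i ≤ c s * Real.exp ((L+1)*T) := by linarith
    have := mul_le_mul_of_nonneg_right h' (inv_nonneg.mpr hs'.le)
    simpa [div_eq_mul_inv] using this

end Step1
/-- Theorem 1, Part 1: if `(a, â)` solves the deterministic embedding ODE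
with `(a(0), â(0)) ∈ 𝒮`, then for every `T ≥ 0` the hyperrectangle `[a(T), â(T)]` is
robustly forward invariant for `ẋ = F(x, w)`: every solution under any piecewise
continuous disturbance valued in `𝒲` that starts in `[a(T), â(T)]` remains there. -/

theorem thm1_part1_robust_forward_invariance
    {n m : ℕ} (wl wu : Fin m → ℝ) (hwlu : wl ≤ wu)
    (F : (Fin n → ℝ) → (Fin m → ℝ) → (Fin n → ℝ))
    (d : (Fin n → ℝ) → (Fin m → ℝ) → (Fin n → ℝ) → (Fin m → ℝ) → (Fin n → ℝ))
    (hd : IsDecompositionFunction wl wu F d)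
    -- (a, ah) solves the deterministic embedding ODE on [0, ∞)
    (a ah : ℝ → (Fin n → ℝ))
    (ha : ∀ t ∈ Set.Ici (0:ℝ), HasDerivAt a (d (a t) wl (ah t) wu) t)
    (hah : ∀ t ∈ Set.Ici (0:ℝ), HasDerivAt ah (d (ah t) wu (a t) wl) t)
    -- (a 0, ah 0) ∈ 𝒮, i.e. a 0 ⪯ ah 0 and 0 ⪯_SE e(a 0, ah 0)
    (h0tri : a 0 ≤ ah 0)
    (h0SE : (0 : Fin n → ℝ) ≤ d (a 0) wl (ah 0) wu ∧ d (ah 0) wu (a 0) wl ≤ (0 : Fin n → ℝ)) :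
    ∀ T : ℝ, 0 ≤ T →
      ∀ T' : ℝ, 0 ≤ T' →
        ∀ (x : ℝ → (Fin n → ℝ)) (w : ℝ → (Fin m → ℝ)),
          (∀ t ∈ Set.Icc (0:ℝ) T', w t ∈ Set.Icc wl wu) →
          PiecewiseContinuousOn w (Set.Icc 0 T') →
          (∀ t ∈ Set.Icc (0:ℝ) T', HasDerivAt x (F (x t) (w t)) t) →
          x 0 ∈ Set.Icc (a T) (ah T) →
          ∀ t ∈ Set.Icc (0:ℝ) T', x t ∈ Set.Icc (a T) (ah T) := by
  intro T hT T' hT' x w hw _hpw hx hx0 t ht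
  have hwlm : wl ∈ Set.Icc wl wu := ⟨le_refl _, hwlu⟩
  have hwum : wu ∈ Set.Icc wl wu := ⟨hwlu, le_refl _⟩
  obtain ⟨hSE1, hSE2⟩ := SE_propagation hwlu hd a ah ha hah h0SE T hT
  set b : Fin n → ℝ := a T with hb
  set bh : Fin n → ℝ := ah T with hbh
  set D : ((Fin n → ℝ) × (Fin m → ℝ)) × ((Fin n → ℝ) × (Fin m → ℝ)) → (Fin n → ℝ) :=
    fun p => d p.1.1 p.1.2 p.2.1 p.2.2 with hD
  have hxC : ContinuousOn x (Set.Icc (0:ℝ) T') :=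
    fun t ht => ((hx t ht).continuousAt).continuousWithinAt
  set K₂ : Set (((Fin n → ℝ) × (Fin m → ℝ)) × ((Fin n → ℝ) × (Fin m → ℝ))) :=
    ((fun t => ((x t, wl), (x t, wu))) '' Set.Icc (0:ℝ) T') ∪
    ((fun t => ((x t, wu), (x t, wl))) '' Set.Icc (0:ℝ) T') with hK₂
  have hK₂c : IsCompact K₂ := by
    refine IsCompact.union ?_ ?_
    · exact isCompact_Icc.image_of_continuousOn
        ((hxC.prodMk continuousOn_const).prodMk (hxC.prodMk continuousOn_const))
    · exact isCompact_Icc.image_of_continuousOn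
        ((hxC.prodMk continuousOn_const).prodMk (hxC.prodMk continuousOn_const))
  obtain ⟨L, hL0, r, hr, hlip⟩ := locallyLipschitz_uniform hd.1 hK₂c
  set Y : ℝ → (Fin n ⊕ Fin n) → ℝ := fun t =>
    Sum.elim (fun i => x t i - b i) (fun i => bh i - x t i) with hY
  set Y' : ℝ → (Fin n ⊕ Fin n) → ℝ := fun t =>
    Sum.elim (fun i => F (x t) (w t) i) (fun i => -(F (x t) (w t) i)) with hY'
  have hderiv : ∀ i, ∀ t ∈ Set.Icc (0:ℝ) T', HasDerivAt (fun t => Y t i) (Y' t i) t := by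
    rintro (i | i) t₀ ht₀
    · exact (hasDerivAt_pi.mp (hx t₀ ht₀) i).sub_const (b i)
    · exact (hasDerivAt_pi.mp (hx t₀ ht₀) i).const_sub (bh i)
  have h0 : ∀ i, -(0:ℝ) ≤ Y 0 i := by
    rintro (i | i)
    · simp only [hY, Sum.elim_inl, neg_zero]
      exact sub_nonneg.mpr (hx0.1 i)
    · simp only [hY, Sum.elim_inr, neg_zero]
      exact sub_nonneg.mpr (hx0.2 i)
  have hbd : ∀ t₀ ∈ Set.Icc (0:ℝ) T', ∀ i, ∀ δ : ℝ, 0 < δ → δ ≤ r →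
      (∀ j, -δ ≤ Y t₀ j) → Y t₀ i = -δ → -(L * δ) ≤ Y' t₀ i := by
    intro t₀ ht₀ i δ hδ hδr hall hit
    have hwt : w t₀ ∈ Set.Icc wl wu := hw t₀ ht₀
    have hFd : F (x t₀) (w t₀) = d (x t₀) (w t₀) (x t₀) (w t₀) :=
      (hd.2.1 (x t₀) (w t₀) hwt).symm
    rcases i with i | i
    · -- lower barrier
      set v'' : Fin n → ℝ := fun j => if j = i then b i else max (x t₀ j) (b j) with hv''
      set vh'' : Fin n → ℝ := fun j => min (x t₀ j) (bh j) with hvh''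
      have hstepw : d (x t₀) wl (x t₀) wu i ≤ d (x t₀) (w t₀) (x t₀) (w t₀) i :=
        dW hd i (x t₀) (x t₀) hwlm hwt hwum hwt hwt.1 hwt.2
      have hd1 : dist (x t₀) v'' ≤ δ := by
        refine (dist_pi_le_iff hδ.le).mpr fun j => ?_
        rw [Real.dist_eq]
        rcases eq_or_ne j i with rfl | hj
        · have : x t₀ j - b j = -δ := hit
          simp only [hv'', if_pos rfl]
          rw [abs_le]; constructor <;> linarith
        · have hYj : -δ ≤ x t₀ j - b j := hall (Sum.inl j)
          simp only [hv'', if_neg hj]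
          rw [abs_le]
          rcases le_total (b j) (x t₀ j) with h' | h'
          · rw [max_eq_left h']; constructor <;> linarith
          · rw [max_eq_right h']; constructor <;> linarith
      have hd2 : dist (x t₀) vh'' ≤ δ := by
        refine (dist_pi_le_iff hδ.le).mpr fun j => ?_
        rw [Real.dist_eq]
        have hYj : -δ ≤ bh j - x t₀ j := hall (Sum.inr j)
        rw [abs_le]
        rcases le_total (x t₀ j) (bh j) with h' | h'
        · simp only [hvh'', min_eq_left h']; constructor <;> linarith
        · simp only [hvh'', min_eq_right h']; constructor <;> linarith
      have hq1K : ((x t₀, wl), (x t₀, wu)) ∈ K₂ := Or.inl ⟨t₀, ht₀, rfl⟩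
      have hdistq : dist (((x t₀, wl), (x t₀, wu)) :
          ((Fin n → ℝ) × (Fin m → ℝ)) × ((Fin n → ℝ) × (Fin m → ℝ)))
          (((v'', wl), (vh'', wu))) ≤ δ := by
        rw [Prod.dist_eq, Prod.dist_eq, Prod.dist_eq]
        simp only [dist_self]
        exact max_le (max_le hd1 hδ.le) (max_le hd2 hδ.le)
      have hlipest : dist (D ((x t₀, wl), (x t₀, wu))) (D ((v'', wl), (vh'', wu))) ≤ L * δ := by
        have := hlip _ hq1K ((x t₀, wl), (x t₀, wu)) (Metric.mem_closedBall_self hr.le)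
          (((v'', wl), (vh'', wu))) (Metric.mem_closedBall.mpr
            (by rw [dist_comm]; exact hdistq.trans hδr))
        exact this.trans (mul_le_mul_of_nonneg_left hdistq hL0)
      have hcomp : |d (x t₀) wl (x t₀) wu i - d v'' wl vh'' wu i| ≤ L * δ := by
        have := dist_le_pi_dist (D ((x t₀, wl), (x t₀, wu))) (D ((v'', wl), (vh'', wu))) i
        rw [Real.dist_eq] at this
        exact this.trans hlipest
      have hmono : d b wl bh wu i ≤ d v'' wl vh'' wu i := by
        refine dC1 hd i hwlm hwum ?_ ?_ ?_
        · intro j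
          rcases eq_or_ne j i with rfl | hj
          · simp [hv'']
          · simp only [hv'', if_neg hj]; exact le_max_right _ _
        · simp [hv'']
        · intro j; exact min_le_right _ _
      have habs := abs_le.mp hcomp
      have hSE : (0:ℝ) ≤ d b wl bh wu i := hSE1 i
      simp only [hY', Sum.elim_inl]
      rw [hFd]
      linarith
    · -- upper barrier
      set v'' : Fin n → ℝ := fun j => if j = i then bh i else min (x t₀ j) (bh j) with hv''
      set vh'' : Fin n → ℝ := fun j => max (x t₀ j) (b j) with hvh''
      have hstepw : d (x t₀) (w t₀) (x t₀) (w t₀) i ≤ d (x t₀) wu (x t₀) wl i :=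
        dW hd i (x t₀) (x t₀) hwt hwum hwt hwlm hwt.2 hwt.1
      have hd1 : dist (x t₀) v'' ≤ δ := by
        refine (dist_pi_le_iff hδ.le).mpr fun j => ?_
        rw [Real.dist_eq]
        rcases eq_or_ne j i with rfl | hj
        · have : bh j - x t₀ j = -δ := hit
          simp only [hv'', if_pos rfl]
          rw [abs_le]; constructor <;> linarith
        · have hYj : -δ ≤ bh j - x t₀ j := hall (Sum.inr j)
          simp only [hv'', if_neg hj]
          rw [abs_le]
          rcases le_total (x t₀ j) (bh j) with h' | h'
          · rw [min_eq_left h']; constructor <;> linarith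
          · rw [min_eq_right h']; constructor <;> linarith
      have hd2 : dist (x t₀) vh'' ≤ δ := by
        refine (dist_pi_le_iff hδ.le).mpr fun j => ?_
        rw [Real.dist_eq]
        have hYj : -δ ≤ x t₀ j - b j := hall (Sum.inl j)
        rw [abs_le]
        rcases le_total (b j) (x t₀ j) with h' | h'
        · simp only [hvh'', max_eq_left h']; constructor <;> linarith
        · simp only [hvh'', max_eq_right h']; constructor <;> linarith
      have hq1K : ((x t₀, wu), (x t₀, wl)) ∈ K₂ := Or.inr ⟨t₀, ht₀, rfl⟩
      have hdistq : dist (((x t₀, wu), (x t₀, wl)) :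
          ((Fin n → ℝ) × (Fin m → ℝ)) × ((Fin n → ℝ) × (Fin m → ℝ)))
          (((v'', wu), (vh'', wl))) ≤ δ := by
        rw [Prod.dist_eq, Prod.dist_eq, Prod.dist_eq]
        simp only [dist_self]
        exact max_le (max_le hd1 hδ.le) (max_le hd2 hδ.le)
      have hlipest : dist (D ((x t₀, wu), (x t₀, wl))) (D ((v'', wu), (vh'', wl))) ≤ L * δ := by
        have := hlip _ hq1K ((x t₀, wu), (x t₀, wl)) (Metric.mem_closedBall_self hr.le)
          (((v'', wu), (vh'', wl))) (Metric.mem_closedBall.mpr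
            (by rw [dist_comm]; exact hdistq.trans hδr))
        exact this.trans (mul_le_mul_of_nonneg_left hdistq hL0)
      have hcomp : |d (x t₀) wu (x t₀) wl i - d v'' wu vh'' wl i| ≤ L * δ := by
        have := dist_le_pi_dist (D ((x t₀, wu), (x t₀, wl))) (D ((v'', wu), (vh'', wl))) i
        rw [Real.dist_eq] at this
        exact this.trans hlipest
      have hmono : d v'' wu vh'' wl i ≤ d bh wu b wl i := by
        refine dC1 hd i hwum hwlm ?_ ?_ ?_
        · intro j
          rcases eq_or_ne j i with rfl | hj
          · simp [hv'']
          · simp only [hv'', if_neg hj]; exact min_le_right _ _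
        · simp [hv'']
        · intro j; exact le_max_right _ _
      have habs := abs_le.mp hcomp
      have hSE : d bh wu b wl i ≤ (0:ℝ) := hSE2 i
      simp only [hY', Sum.elim_inr]
      rw [hFd]
      linarith
  have hcΔ : (0:ℝ) * Real.exp ((L + 1) * T') < r := by
    rw [zero_mul]; exact hr
  have hinv := inv_lemma Y Y' T' L 0 r hL0 (le_refl 0) hderiv h0 hcΔ hbd t ht
  constructor
  · intro i
    have := hinv (Sum.inl i)
    simp only [hY, Sum.elim_inl, zero_mul, neg_zero] at this
    linarith
  · intro i
    have := hinv (Sum.inr i)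
    simp only [hY, Sum.elim_inr, zero_mul, neg_zero] at this
    linarith
end
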